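/- arXiv:1608.08460 — 8 statements merged into one kernel-verified Lean document; each statement's English description precedes it below -/
import Mathlib

section
/- For any two nonzero vectors |α⟩ and |β⟩ in a d-dimensional Hilbert space, there exists a maximally coherent pure state |ψ⟩ = (1/√d) ∑_{j=0}^{d−1} e^{iθ_j}|j⟩ such that ⟨α|ψ⟩ ≠ 0 and ⟨β|ψ⟩ ≠ 0. -/
open Polynomial Complex Finset

lemma mypoly_ne_zero {d : ℕ} (γ : Fin d → ℂ) (k : Fin d) (hk : γ k ≠ 0) :
    (∑ j : Fin d, C ((starRingEnd ℂ) (γ j)) * X ^ (j : ℕ)) ≠ 0 := by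
  intro h
  apply hk
  have := congrArg (fun p => Polynomial.coeff p (k : ℕ)) h
  simp only [finset_sum_coeff, coeff_C_mul, coeff_X_pow, coeff_zero, mul_ite, mul_one,
    mul_zero] at this
  simp_rw [Fin.val_eq_val] at this
  rw [Finset.sum_ite_eq univ k (fun j => (starRingEnd ℂ) (γ j)), if_pos (mem_univ k)] at this
  simpa using this

lemma expInj : Set.InjOn (fun t : ℝ => Complex.exp (Complex.I * t)) (Set.Ioo 0 1) := by
  intro a ha b hb hab
  simp only [Complex.exp_eq_exp_iff_exists_int] at hab
  obtain ⟨n, hn⟩ := hab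
  have h2 : (a : ℝ) = b + n * (2 * Real.pi) := by
    have := congrArg Complex.im hn
    simpa [Complex.mul_im, Complex.add_im, Complex.mul_re] using this
  obtain ⟨ha1, ha2⟩ := ha
  obtain ⟨hb1, hb2⟩ := hb
  have hpi := Real.pi_gt_three
  rcases lt_trichotomy n 0 with h | h | h
  · have hn1 : n ≤ -1 := by omega
    have : (n : ℝ) ≤ -1 := by exact_mod_cast hn1
    nlinarith
  · simp [h] at h2; linarith
  · have hn1 : 1 ≤ n := by omega
    have : (1 : ℝ) ≤ (n:ℝ) := by exact_mod_cast hn1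
    nlinarith

lemma key_sum {d : ℕ} (γ : Fin d → ℂ) (c : ℂ) (t : ℝ) (j : Fin d) :
    (starRingEnd ℂ) (γ j) * (c * Complex.exp (Complex.I * ((t * j : ℝ) : ℂ))) =
      c * ((starRingEnd ℂ) (γ j) * (Complex.exp (Complex.I * t)) ^ (j : ℕ)) := by
  rw [← Complex.exp_nat_mul]
  have : Complex.I * ((t * (j:ℕ) : ℝ) : ℂ) = (j : ℕ) * (Complex.I * t) := by
    push_cast; ring
  rw [this]; ring

/-- For any two nonzero vectors `α, β` in `ℂ^d` there exists a maximally
coherent state `|ψ⟩ = (1/√d) ∑_j e^{iθ_j}|j⟩` with `⟨α|ψ⟩ ≠ 0` and `⟨β|ψ⟩ ≠ 0`. -/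
theorem exists_maximally_coherent_nonorthogonal (d : ℕ) (hd : 0 < d)
    (α β : Fin d → ℂ) (hα : α ≠ 0) (hβ : β ≠ 0) :
    ∃ θ : Fin d → ℝ,
      (∑ j, (starRingEnd ℂ) (α j) *
        ((1 / Real.sqrt d : ℝ) * Complex.exp (Complex.I * (θ j : ℝ))) ≠ 0) ∧
      (∑ j, (starRingEnd ℂ) (β j) *
        ((1 / Real.sqrt d : ℝ) * Complex.exp (Complex.I * (θ j : ℝ))) ≠ 0) := by
  obtain ⟨k, hk⟩ := Function.ne_iff.mp hα
  obtain ⟨m, hm⟩ := Function.ne_iff.mp hβ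
  set c : ℂ := ((1 / Real.sqrt d : ℝ) : ℂ) with hc
  have hc0 : c ≠ 0 := by
    simp only [hc, Ne, Complex.ofReal_eq_zero, one_div, inv_eq_zero]
    positivity
  set P : ℂ[X] := ∑ j : Fin d, C ((starRingEnd ℂ) (α j)) * X ^ (j : ℕ) with hPdef
  set Q : ℂ[X] := ∑ j : Fin d, C ((starRingEnd ℂ) (β j)) * X ^ (j : ℕ) with hQdef
  have hP := mypoly_ne_zero α k hk
  have hQ := mypoly_ne_zero β m hm
  have hfin : ({x | P.IsRoot x} ∪ {x | Q.IsRoot x}).Finite :=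
    (Polynomial.finite_setOf_isRoot hP).union (Polynomial.finite_setOf_isRoot hQ)
  have hinf : ((fun t : ℝ => Complex.exp (Complex.I * t)) '' Set.Ioo 0 1).Infinite :=
    Set.Infinite.image expInj (Set.Ioo_infinite zero_lt_one)
  obtain ⟨z, hzmem, hz⟩ := hinf.exists_notMem_finite hfin
  obtain ⟨t, _, rfl⟩ := hzmem
  refine ⟨fun j => t * j, ?_, ?_⟩
  · simp only [key_sum]
    rw [← Finset.mul_sum]
    have hev : (∑ x : Fin d, (starRingEnd ℂ) (α x) * Complex.exp (Complex.I * t) ^ (x : ℕ))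
        = P.eval (Complex.exp (Complex.I * t)) := by
      rw [hPdef, eval_finset_sum]; simp
    rw [hev]
    exact mul_ne_zero hc0 fun h => hz (Or.inl h)
  · simp only [key_sum]
    rw [← Finset.mul_sum]
    have hev : (∑ x : Fin d, (starRingEnd ℂ) (β x) * Complex.exp (Complex.I * t) ^ (x : ℕ))
        = Q.eval (Complex.exp (Complex.I * t)) := by
      rw [hQdef, eval_finset_sum]; simp
    rw [hev]
    exact mul_ne_zero hc0 fun h => hz (Or.inr h)
end

section
/- Let K = ∑_{i=0}^{d−1} |i⟩⟨φ_i| be an operator on ℂ^d. If for every maximally coherent state |ψ⟩ the state K|ψ⟩⟨ψ|K† is diagonal in the reference basis, then at most one of the vectors φ_i is nonzero, i.e., K = |i₀⟩⟨φ| for some index i₀ and some vector φ. -/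
open Matrix

section AuxOmega
open Complex Finset

noncomputable def om : ℂ := Complex.exp (2 * Real.pi * Complex.I / 3)

lemma om_pow_three : om ^ 3 = 1 := by
  rw [om, ← Complex.exp_nat_mul]
  have : (3:ℕ) * (2 * (Real.pi:ℂ) * Complex.I / 3) = 2 * Real.pi * Complex.I := by
    push_cast; ring
  rw [this, Complex.exp_two_pi_mul_I]

lemma om_ne_one : om ≠ 1 := by
  rw [om]
  intro hh
  rw [Complex.exp_eq_one_iff] at hh
  obtain ⟨n, hn⟩ := hh
  have hz : (2 * (Real.pi:ℂ) * Complex.I) ≠ 0 := by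
    simp [Real.pi_ne_zero, Complex.I_ne_zero]
  have h0 : (2 * (Real.pi:ℂ) * Complex.I) * (1 - 3 * n) = 0 := by
    linear_combination 3 * hn
  have h1 : (1 : ℂ) - 3 * n = 0 := by
    rcases mul_eq_zero.mp h0 with h | h
    · exact absurd h hz
    · exact h
  have h2 : ((3 * n : ℤ) : ℂ) = ((1:ℤ) : ℂ) := by push_cast; linear_combination -h1
  have h4 : (3 * n : ℤ) = 1 := by exact_mod_cast h2
  omega

lemma om_sum : 1 + om + om ^ 2 = 0 := by
  have h : (om - 1) * (1 + om + om ^ 2) = 0 := by linear_combination om_pow_three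
  rcases mul_eq_zero.mp h with h' | h'
  · exact absurd (sub_eq_zero.mp h') om_ne_one
  · exact h'

lemma om_star : star om = om ^ 2 := by
  have h1 : star om = Complex.exp (-(2 * Real.pi * Complex.I / 3)) := by
    show (starRingEnd ℂ) om = _
    rw [om, ← Complex.exp_conj]
    congr 1
    simp [map_div₀, Complex.conj_I, map_ofNat]
    ring
  have h2 : om ^ 2 = Complex.exp (2 * (2 * Real.pi * Complex.I / 3)) := by
    rw [om, ← Complex.exp_nat_mul]; norm_num
  rw [h1, h2]
  rw [show (2 : ℂ) * (2 * Real.pi * Complex.I / 3) = -(2 * Real.pi * Complex.I / 3) + 2 * Real.pi * Complex.I by ring]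
  rw [Complex.exp_add, Complex.exp_two_pi_mul_I, mul_one]

lemma om_star_pow (n : ℕ) : star (om ^ n) = om ^ (2 * n) := by
  rw [star_pow, om_star, ← pow_mul, mul_comm]

lemma om_conj : (starRingEnd ℂ) om = om ^ 2 := om_star

lemma key {d : ℕ} (f g : Fin d → ℂ)
    (h0 : ∀ θ : Fin d → ℝ,
      (∑ p, f p * Complex.exp (Complex.I * (θ p : ℝ))) *
        star (∑ q, g q * Complex.exp (Complex.I * (θ q : ℝ))) = 0)
    (j l : Fin d) (hjl : j ≠ l) :
    f j * star (g l) = 0 := by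
  classical
  have h3 := om_pow_three
  have hsum := om_sum
  have hA2 : 1 + om ^ 2 + om ^ 4 = 0 := by linear_combination om_sum + om * om_pow_three
  set E : Fin 3 × Fin 3 → Fin d → ℂ := fun ab p =>
    if p = j then om ^ (ab.1 : ℕ) else if p = l then om ^ (ab.2 : ℕ) else 1 with hEdef
  set θf : Fin 3 × Fin 3 → Fin d → ℝ := fun ab p =>
    if p = j then (ab.1 : ℕ) * (2 * Real.pi / 3)
    else if p = l then (ab.2 : ℕ) * (2 * Real.pi / 3) else 0 with hθf
  have hE : ∀ (ab : Fin 3 × Fin 3) (p : Fin d),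
      Complex.exp (Complex.I * (θf ab p : ℝ)) = E ab p := by
    intro ab p
    have base : ∀ n : ℕ, Complex.exp (Complex.I * ((n : ℝ) * (2 * Real.pi / 3) : ℝ)) = om ^ n := by
      intro n
      rw [om, ← Complex.exp_nat_mul]
      congr 1
      push_cast
      ring
    by_cases hpj : p = j
    · simp only [hθf, hEdef, hpj, if_pos rfl]
      exact base _
    · by_cases hpl : p = l
      · simp only [hθf, hEdef, hpj, hpl, if_neg (hpl ▸ hjl.symm : ¬ l = j), if_pos rfl]
        exact base _
      · simp only [hθf, hEdef, if_neg hpj, if_neg hpl]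
        norm_num
  -- weight
  set c : Fin 3 × Fin 3 → ℂ := fun ab => om ^ (2 * (ab.1 : ℕ)) * om ^ ((ab.2 : ℕ)) with hc
  have hT : ∑ ab : Fin 3 × Fin 3,
      c ab * ((∑ p, f p * E ab p) * (∑ q, star (g q) * star (E ab q))) = 0 := by
    apply Finset.sum_eq_zero
    intro ab _
    have e1 : (∑ p, f p * E ab p) = ∑ p, f p * Complex.exp (Complex.I * (θf ab p : ℝ)) := by
      refine Finset.sum_congr rfl fun p _ => ?_
      rw [hE]
    have e2 : (∑ q, star (g q) * star (E ab q))
        = star (∑ q, g q * Complex.exp (Complex.I * (θf ab q : ℝ))) := by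
      rw [star_sum]
      refine Finset.sum_congr rfl fun q _ => ?_
      rw [star_mul', hE]
    rw [e1, e2, h0 (θf ab), mul_zero]
  have claim1 : ∀ ab : Fin 3 × Fin 3,
      c ab * ((∑ p, f p * E ab p) * (∑ q, star (g q) * star (E ab q)))
        = ∑ pq : Fin d × Fin d, c ab * ((f pq.1 * star (g pq.2)) * (E ab pq.1 * star (E ab pq.2))) := by
    intro ab
    rw [Finset.sum_mul_sum, Fintype.sum_prod_type]
    simp only [Finset.mul_sum]
    refine Finset.sum_congr rfl fun p _ => ?_
    refine Finset.sum_congr rfl fun q _ => ?_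
    ring
  simp only [claim1] at hT
  rw [Finset.sum_comm] at hT
  -- now hT : ∑ pq, ∑ ab, c ab * (fg * EE) = 0
  have claim2 : ∀ p q : Fin d,
      (∑ ab : Fin 3 × Fin 3, c ab * ((f p * star (g q)) * (E ab p * star (E ab q))))
        = (f p * star (g q)) * (if p = j ∧ q = l then 9 else 0) := by
    intro p q
    rw [Fintype.sum_prod_type]
    have hlj : ¬ (l = j) := fun hh => hjl hh.symm
    by_cases hpj : p = j
    · by_cases hqj : q = j
      · rw [if_neg (fun hh => hjl (hqj ▸ hh.2)), mul_zero]
        simp only [hEdef, hc, hpj, hqj, if_pos rfl, om_star_pow, om_conj, map_pow, Fin.sum_univ_three,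
          Fin.val_zero, Fin.val_one, Complex.star_def]
        norm_num [om_conj, Complex.star_def, map_pow, apply_ite (starRingEnd ℂ), if_neg hlj, if_neg hjl]
        linear_combination ((f j * (starRingEnd ℂ) (g j)) * (1 + om^5 + om^10)) * hsum
      · by_cases hql : q = l
        · rw [if_pos ⟨hpj, hql⟩]
          simp only [hEdef, hc, hpj, hql, if_pos rfl, if_neg hlj, if_neg hqj, om_star_pow, om_conj, map_pow, Fin.sum_univ_three,
            Fin.val_zero, Fin.val_one, Complex.star_def]
          norm_num [om_conj, Complex.star_def, map_pow, apply_ite (starRingEnd ℂ), if_neg hlj, if_neg hjl]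
          linear_combination ((f j * (starRingEnd ℂ) (g l)) * (om^3 + 2) * (om^6 + om^3 + 4)) * h3
        · rw [if_neg (fun hh => hql hh.2), mul_zero]
          simp only [hEdef, hc, hpj, if_pos rfl, if_neg hqj, if_neg hql, om_star_pow, om_conj, map_pow,
            Fin.sum_univ_three, Fin.val_zero, Fin.val_one, Complex.star_def]
          norm_num [om_conj, Complex.star_def, map_pow, apply_ite (starRingEnd ℂ), if_neg hlj, if_neg hjl]
          linear_combination ((f j * (starRingEnd ℂ) (g q)) * (1 + om^3 + om^6)) * hsum
    · rw [if_neg (fun hh => hpj hh.1), mul_zero]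
      by_cases hpl : p = l
      · by_cases hqj : q = j
        · simp only [hEdef, hc, hpl, hqj, if_pos rfl, if_neg hlj, om_star_pow, om_conj, map_pow, Fin.sum_univ_three,
            Fin.val_zero, Fin.val_one, Complex.star_def]
          norm_num [om_conj, Complex.star_def, map_pow, apply_ite (starRingEnd ℂ), if_neg hlj, if_neg hjl]
          linear_combination ((f l * (starRingEnd ℂ) (g j)) * (1 + om^4 + om^8)) * hA2
        · by_cases hql : q = l
          · simp only [hEdef, hc, hpl, hql, if_pos rfl, if_neg hlj, om_star_pow, om_conj, map_pow, Fin.sum_univ_three,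
              Fin.val_zero, Fin.val_one, Complex.star_def]
            norm_num [om_conj, Complex.star_def, map_pow, apply_ite (starRingEnd ℂ), if_neg hlj, if_neg hjl]
            linear_combination ((f l * (starRingEnd ℂ) (g l)) * (1 + om^4 + om^8)) * hA2
          · simp only [hEdef, hc, hpl, if_pos rfl, if_neg hlj, if_neg hqj, if_neg hql,
              om_star_pow, om_conj, map_pow, Fin.sum_univ_three, Fin.val_zero, Fin.val_one, Complex.star_def]
            norm_num [om_conj, Complex.star_def, map_pow, apply_ite (starRingEnd ℂ), if_neg hlj, if_neg hjl]
            linear_combination ((f l * (starRingEnd ℂ) (g q)) * (1 + om^2 + om^4)) * hA2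
      · by_cases hqj : q = j
        · simp only [hEdef, hc, hqj, if_pos rfl, if_neg hpj, if_neg hpl, om_star_pow, om_conj, map_pow,
            Fin.sum_univ_three, Fin.val_zero, Fin.val_one, Complex.star_def]
          norm_num [om_conj, Complex.star_def, map_pow, apply_ite (starRingEnd ℂ), if_neg hlj, if_neg hjl]
          linear_combination ((f p * (starRingEnd ℂ) (g j)) * (1 + om^4 + om^8)) * hsum
        · by_cases hql : q = l
          · simp only [hEdef, hc, hql, if_pos rfl, if_neg hpj, if_neg hpl, if_neg hqj,
              om_star_pow, om_conj, map_pow, Fin.sum_univ_three, Fin.val_zero, Fin.val_one, Complex.star_def]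
            norm_num [om_conj, Complex.star_def, map_pow, apply_ite (starRingEnd ℂ), if_neg hlj, if_neg hjl]
            linear_combination ((f p * (starRingEnd ℂ) (g l)) * (1 + om^3 + om^6)) * hA2
          · simp only [hEdef, hc, if_neg hpj, if_neg hpl, if_neg hqj, if_neg hql,
              om_star_pow, om_conj, map_pow, Fin.sum_univ_three, Fin.val_zero, Fin.val_one, Complex.star_def]
            norm_num [om_conj, Complex.star_def, map_pow, apply_ite (starRingEnd ℂ), if_neg hlj, if_neg hjl]
            linear_combination ((f p * (starRingEnd ℂ) (g q)) * (1 + om^2 + om^4)) * hsum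
  -- finish
  have final : ∑ pq : Fin d × Fin d,
      (f pq.1 * star (g pq.2)) * (if pq.1 = j ∧ pq.2 = l then (9:ℂ) else 0)
        = 9 * (f j * star (g l)) := by
    rw [Fintype.sum_prod_type]
    rw [Finset.sum_eq_single j]
    · rw [Finset.sum_eq_single l]
      · simp
        ring
      · intro b _ hb
        simp [hb]
      · intro hb; exact absurd (Finset.mem_univ l) hb
    · intro a _ ha
      apply Finset.sum_eq_zero
      intro b _
      simp [ha]
    · intro ha; exact absurd (Finset.mem_univ j) ha
  have hstep : ∑ pq : Fin d × Fin d, ∑ ab : Fin 3 × Fin 3,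
      c ab * ((f pq.1 * star (g pq.2)) * (E ab pq.1 * star (E ab pq.2)))
        = ∑ pq : Fin d × Fin d, (f pq.1 * star (g pq.2)) * (if pq.1 = j ∧ pq.2 = l then (9:ℂ) else 0) :=
    Finset.sum_congr rfl fun pq _ => claim2 pq.1 pq.2
  have hz : (9:ℂ) * (f j * star (g l)) = 0 := by
    rw [← final, ← hstep]
    exact hT
  have h9 : (9:ℂ) ≠ 0 := by norm_num
  rcases mul_eq_zero.mp hz with h' | h'
  · exact absurd h' h9
  · exact h'

end AuxOmega

/-- If the operator `K = ∑_i |i⟩⟨φ_i|` on `ℂ^d` is such that the state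
`K|ψ⟩⟨ψ|K†` is diagonal in the reference basis for every maximally coherent state
`|ψ⟩ = (1/√d) ∑_j e^{iθ_j}|j⟩`, then at most one row of `K` is nonzero, i.e.
`K = |i₀⟩⟨φ|` for some index `i₀` and some vector `φ`. -/
theorem kraus_of_selective_coherence_breaking (d : ℕ) (hd : 0 < d)
    (K : Matrix (Fin d) (Fin d) ℂ)
    (h : ∀ θ : Fin d → ℝ,
      (K *
        Matrix.vecMulVec
          (fun j => ((1 / Real.sqrt d : ℝ) : ℂ) * Complex.exp (Complex.I * (θ j : ℝ)))
          (fun j => star (((1 / Real.sqrt d : ℝ) : ℂ) * Complex.exp (Complex.I * (θ j : ℝ))))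
        * Kᴴ).IsDiag) :
    ∃ (i₀ : Fin d) (φ : Fin d → ℂ),
      K = Matrix.of fun i j => if i = i₀ then star (φ j) else 0 := by
  classical
  set cc : ℂ := ((1 / Real.sqrt d : ℝ) : ℂ) with hcc
  have hccne : cc ≠ 0 := by
    rw [hcc]
    have : (0:ℝ) < Real.sqrt d := Real.sqrt_pos.mpr (by exact_mod_cast hd)
    simp only [ne_eq, Complex.ofReal_eq_zero]
    positivity
  have h0 : ∀ i k : Fin d, i ≠ k → ∀ θ : Fin d → ℝ,
      (∑ p, K i p * Complex.exp (Complex.I * (θ p : ℝ))) *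
        star (∑ q, K k q * Complex.exp (Complex.I * (θ q : ℝ))) = 0 := by
    intro i k hik θ
    have hdiag := h θ hik
    have hM : (K *
        Matrix.vecMulVec
          (fun j => cc * Complex.exp (Complex.I * (θ j : ℝ)))
          (fun j => star (cc * Complex.exp (Complex.I * (θ j : ℝ))))
        * Kᴴ) i k
        = (cc * ∑ p, K i p * Complex.exp (Complex.I * (θ p : ℝ))) *
          star (cc * ∑ q, K k q * Complex.exp (Complex.I * (θ q : ℝ))) := by
      rw [Matrix.mul_apply]
      simp only [Matrix.mul_apply, Matrix.conjTranspose_apply, Matrix.vecMulVec_apply]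
      rw [star_mul', star_sum]
      simp only [star_mul']
      rw [Finset.mul_sum, Finset.mul_sum, Finset.sum_mul_sum]
      simp only [Finset.sum_mul]
      rw [Finset.sum_comm]
      refine Finset.sum_congr rfl fun q _ => ?_
      refine Finset.sum_congr rfl fun p _ => ?_
      ring
    beta_reduce at hdiag
    rw [hM] at hdiag
    have hcs : star cc ≠ 0 := star_ne_zero.mpr hccne
    rw [star_mul'] at hdiag
    have := mul_ne_zero hccne hcs
    -- hdiag : (cc * A) * (star cc * star B) = 0
    have hre : (cc * star cc) * ((∑ p, K i p * Complex.exp (Complex.I * (θ p : ℝ))) *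
        star (∑ q, K k q * Complex.exp (Complex.I * (θ q : ℝ)))) = 0 := by
      rw [← hdiag]; ring
    rcases mul_eq_zero.mp hre with h' | h'
    · exact absurd h' this
    · exact h'
  by_cases hK : ∀ i j : Fin d, K i j = 0
  · refine ⟨⟨0, hd⟩, 0, ?_⟩
    ext i j
    simp [hK i j]
  · push_neg at hK
    obtain ⟨i₀, j₀, hij⟩ := hK
    refine ⟨i₀, fun j => star (K i₀ j), ?_⟩
    have hrow : ∀ k : Fin d, k ≠ i₀ → ∀ l : Fin d, K k l = 0 := by
      intro k hk l
      by_cases hl : l = j₀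
      · -- suppose K k j₀ ≠ 0, derive contradiction
        subst hl
        by_contra hkl
        -- row i₀ concentrated at l
        have hrow_i₀ : ∀ l' : Fin d, l' ≠ l → K i₀ l' = 0 := by
          intro l' hl'
          have := key (K k) (K i₀) (h0 k i₀ (fun hh => hk hh)) l l' (fun hh => hl' hh.symm)
          rcases mul_eq_zero.mp this with h' | h'
          · exact absurd h' hkl
          · simpa using h'
        have hrow_k : ∀ l' : Fin d, l' ≠ l → K k l' = 0 := by
          intro l' hl'
          have := key (K i₀) (K k) (h0 i₀ k (fun hh => hk hh.symm)) l l' (fun hh => hl' hh.symm)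
          rcases mul_eq_zero.mp this with h' | h'
          · exact absurd h' hij
          · simpa using h'
        have h00 := h0 i₀ k (fun hh => hk hh.symm) (fun _ => 0)
        simp only [Complex.ofReal_zero, mul_zero, Complex.exp_zero, mul_one] at h00
        have e1 : (∑ p, K i₀ p) = K i₀ l := by
          rw [Finset.sum_eq_single l]
          · intro b _ hb; exact hrow_i₀ b hb
          · intro hb; exact absurd (Finset.mem_univ l) hb
        have e2 : (∑ q, K k q) = K k l := by
          rw [Finset.sum_eq_single l]
          · intro b _ hb; exact hrow_k b hb
          · intro hb; exact absurd (Finset.mem_univ l) hb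
        rw [e1, e2] at h00
        rcases mul_eq_zero.mp h00 with h' | h'
        · exact absurd h' hij
        · exact hkl (by simpa using h')
      · -- l ≠ j₀ : use key with (i₀, j₀) vs (k, l)
        have := key (K i₀) (K k) (h0 i₀ k (fun hh => hk hh.symm)) j₀ l (fun hh => hl hh.symm)
        rcases mul_eq_zero.mp this with h' | h'
        · exact absurd h' hij
        · simpa using h'
    ext i j
    by_cases hi : i = i₀
    · subst hi; simp [Matrix.of_apply]
    · simp [Matrix.of_apply, hi, hrow i hi j]
end

section
/- Let Φ be an incoherent channel on ℂ^d such that Φ(|ψ⟩⟨ψ|) is diagonal for every maximally coherent state |ψ⟩. Then Φ(|i⟩⟨j|) is diagonal for all reference basis indices i, j. -/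
open Matrix

private lemma fv0' : ((0:Fin 4):ℕ) = 0 := rfl
private lemma fv1' : ((1:Fin 4):ℕ) = 1 := rfl
private lemma fv2' : ((2:Fin 4):ℕ) = 2 := rfl
private lemma fv3' : ((3:Fin 4):ℕ) = 3 := rfl

private lemma csum1 : ∑ a : Fin 4, ∑ b : Fin 4,
    star ((Complex.I)^(a:ℕ)) * Complex.I^(b:ℕ) * (Complex.I^(a:ℕ) * star (Complex.I^(b:ℕ))) = 16 := by
  simp [Fin.sum_univ_four, fv0', fv1', fv2', fv3', pow_succ, Complex.ext_iff]
  norm_num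

private lemma csum2 : ∑ a : Fin 4, ∑ b : Fin 4,
    star ((Complex.I)^(a:ℕ)) * Complex.I^(b:ℕ) * (Complex.I^(b:ℕ) * star (Complex.I^(a:ℕ))) = 0 := by
  simp [Fin.sum_univ_four, fv0', fv1', fv2', fv3', pow_succ, Complex.ext_iff]

private lemma csum3 : ∑ a : Fin 4, ∑ b : Fin 4,
    star ((Complex.I)^(a:ℕ)) * Complex.I^(b:ℕ) * (Complex.I^(a:ℕ) * star (1:ℂ)) = 0 := by
  simp [Fin.sum_univ_four, fv0', fv1', fv2', fv3', pow_succ, Complex.ext_iff]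

private lemma csum4 : ∑ a : Fin 4, ∑ b : Fin 4,
    star ((Complex.I)^(a:ℕ)) * Complex.I^(b:ℕ) * (Complex.I^(b:ℕ) * star (1:ℂ)) = 0 := by
  simp [Fin.sum_univ_four, fv0', fv1', fv2', fv3', pow_succ, Complex.ext_iff]

private lemma csum5 : ∑ a : Fin 4, ∑ b : Fin 4,
    star ((Complex.I)^(a:ℕ)) * Complex.I^(b:ℕ) * ((1:ℂ) * star (Complex.I^(a:ℕ))) = 0 := by
  simp [Fin.sum_univ_four, fv0', fv1', fv2', fv3', pow_succ, Complex.ext_iff]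

private lemma csum6 : ∑ a : Fin 4, ∑ b : Fin 4,
    star ((Complex.I)^(a:ℕ)) * Complex.I^(b:ℕ) * ((1:ℂ) * star (Complex.I^(b:ℕ))) = 0 := by
  simp [Fin.sum_univ_four, fv0', fv1', fv2', fv3', pow_succ, Complex.ext_iff]
  norm_num

private lemma csum7 : ∑ a : Fin 4, ∑ b : Fin 4,
    star ((Complex.I)^(a:ℕ)) * Complex.I^(b:ℕ) * ((1:ℂ) * star (1:ℂ)) = 0 := by
  simp [Fin.sum_univ_four, fv0', fv1', fv2', fv3', pow_succ, Complex.ext_iff]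

private lemma expI_pow (n : ℕ) :
    Complex.exp (Complex.I * ((Real.pi/2 * n : ℝ) : ℂ)) = Complex.I ^ n := by
  induction n with
  | zero => simp
  | succ n ih =>
    have h : (Real.pi/2 * ((n+1:ℕ):ℝ) : ℝ) = (Real.pi/2 * n : ℝ) + (Real.pi/2:ℝ) := by
      push_cast; ring
    rw [h, Complex.ofReal_add, mul_add, Complex.exp_add, ih,
      mul_comm Complex.I ((Real.pi/2:ℝ):ℂ), Complex.exp_mul_I,
      ← Complex.ofReal_cos, ← Complex.ofReal_sin]
    simp [pow_succ]

private lemma comm4 {d : ℕ} (F : Fin d → Fin d → Fin 4 → Fin 4 → ℂ) :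
    ∑ k, ∑ l, ∑ a : Fin 4, ∑ b : Fin 4, F k l a b
    = ∑ a : Fin 4, ∑ b : Fin 4, ∑ k, ∑ l, F k l a b := by
  calc ∑ k, ∑ l, ∑ a : Fin 4, ∑ b : Fin 4, F k l a b
      = ∑ k, ∑ a : Fin 4, ∑ l, ∑ b : Fin 4, F k l a b :=
        Finset.sum_congr rfl fun k _ => by rw [Finset.sum_comm]
    _ = ∑ a : Fin 4, ∑ k, ∑ l, ∑ b : Fin 4, F k l a b := by rw [Finset.sum_comm]
    _ = ∑ a : Fin 4, ∑ k, ∑ b : Fin 4, ∑ l, F k l a b :=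
        Finset.sum_congr rfl fun a _ => Finset.sum_congr rfl fun k _ => by rw [Finset.sum_comm]
    _ = ∑ a : Fin 4, ∑ b : Fin 4, ∑ k, ∑ l, F k l a b :=
        Finset.sum_congr rfl fun a _ => by rw [Finset.sum_comm]

/-- Let `Φ` be an incoherent (diagonal-preserving) linear channel on `ℂ^d` such
that `Φ(|ψ⟩⟨ψ|)` is diagonal for every maximally coherent state
`|ψ⟩ = (1/√d) ∑_j e^{iθ_j}|j⟩`. Then `Φ(|i⟩⟨j|)` is diagonal for all reference indices `i, j`. -/
theorem diagonal_on_all_matrix_units (d : ℕ)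
    (Φ : Matrix (Fin d) (Fin d) ℂ →ₗ[ℂ] Matrix (Fin d) (Fin d) ℂ)
    (hinc : ∀ A : Matrix (Fin d) (Fin d) ℂ, A.IsDiag → (Φ A).IsDiag)
    (hmcs : ∀ θ : Fin d → ℝ,
      (Φ (Matrix.vecMulVec
        (fun j => ((1 / Real.sqrt d : ℝ) : ℂ) * Complex.exp (Complex.I * (θ j : ℝ)))
        (fun j => star (((1 / Real.sqrt d : ℝ) : ℂ) * Complex.exp (Complex.I * (θ j : ℝ)))))).IsDiag) :
    ∀ i j : Fin d, (Φ (Matrix.single i j (1 : ℂ))).IsDiag := by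
  have hdiagE : ∀ k : Fin d, (Matrix.single k k (1:ℂ)).IsDiag := by
    intro k a b hab
    simp only [Matrix.single, Matrix.of_apply, ite_eq_right_iff, and_imp]
    rintro rfl rfl
    exact absurd rfl hab
  intro i j
  by_cases hij : i = j
  · subst hij; exact hinc _ (hdiagE i)
  intro p q hpq
  have hd : (0 : ℕ) < d := i.pos
  set X : Fin d → Fin d → ℂ := fun k l => Φ (Matrix.single k l 1) p q with hX
  -- entry expansion of Φ
  have hrep : ∀ A : Matrix (Fin d) (Fin d) ℂ, Φ A p q = ∑ k, ∑ l, A k l * X k l := by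
    intro A
    conv_lhs => rw [matrix_eq_sum_single A]
    rw [map_sum, Matrix.sum_apply]
    refine Finset.sum_congr rfl fun k _ => ?_
    rw [map_sum, Matrix.sum_apply]
    refine Finset.sum_congr rfl fun l _ => ?_
    have h1 : Matrix.single k l (A k l) = (A k l) • Matrix.single k l (1:ℂ) := by
      rw [Matrix.smul_single, smul_eq_mul, mul_one]
    rw [h1, LinearMap.map_smul]
    simp [hX, Matrix.smul_apply, smul_eq_mul]
  have hXdiag : ∀ k : Fin d, X k k = 0 := fun k => hinc _ (hdiagE k) hpq
  -- phase identity
  have hS : ∀ θ : Fin d → ℝ,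
      ∑ k, ∑ l, Complex.exp (Complex.I * (θ k : ℝ)) *
        star (Complex.exp (Complex.I * (θ l : ℝ))) * X k l = 0 := by
    intro θ
    have h0 : Φ (Matrix.vecMulVec
        (fun j => ((1 / Real.sqrt d : ℝ) : ℂ) * Complex.exp (Complex.I * (θ j : ℝ)))
        (fun j => star (((1 / Real.sqrt d : ℝ) : ℂ) * Complex.exp (Complex.I * (θ j : ℝ))))) p q = 0 :=
      hmcs θ hpq
    rw [hrep] at h0
    set c : ℂ := ((1 / Real.sqrt d : ℝ) : ℂ) with hc
    have hcc : c * star c = ((1 / d : ℝ) : ℂ) := by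
      rw [hc, Complex.star_def, Complex.conj_ofReal, ← Complex.ofReal_mul]
      congr 1
      rw [div_mul_div_comm, one_mul, Real.mul_self_sqrt (Nat.cast_nonneg d)]
    have h1 : ∑ k, ∑ l, (c * Complex.exp (Complex.I * (θ k : ℝ))) *
        star (c * Complex.exp (Complex.I * (θ l : ℝ))) * X k l = 0 := by
      rw [← h0]
      refine Finset.sum_congr rfl fun k _ => Finset.sum_congr rfl fun l _ => ?_
      simp [Matrix.vecMulVec_apply]
    have h2 : ∑ k, ∑ l, (c * Complex.exp (Complex.I * (θ k : ℝ))) *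
        star (c * Complex.exp (Complex.I * (θ l : ℝ))) * X k l
        = ((1 / d : ℝ) : ℂ) * ∑ k, ∑ l, Complex.exp (Complex.I * (θ k : ℝ)) *
          star (Complex.exp (Complex.I * (θ l : ℝ))) * X k l := by
      rw [Finset.mul_sum]
      refine Finset.sum_congr rfl fun k _ => ?_
      rw [Finset.mul_sum]
      refine Finset.sum_congr rfl fun l _ => ?_
      rw [← hcc]
      simp only [star_mul']
      ring
    rw [h2] at h1
    have hne : ((1 / d : ℝ) : ℂ) ≠ 0 := by
      simp only [ne_eq, Complex.ofReal_eq_zero]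
      positivity
    exact (mul_eq_zero.mp h1).resolve_left hne
  -- the four-phase family
  set f : Fin d → Fin 4 → Fin 4 → ℂ := fun k a b =>
    if k = i then Complex.I^(a:ℕ) else if k = j then Complex.I^(b:ℕ) else 1 with hf
  set C : Fin d → Fin d → ℂ := fun k l =>
    ∑ a : Fin 4, ∑ b : Fin 4,
      star ((Complex.I)^(a:ℕ)) * Complex.I^(b:ℕ) * (f k a b * star (f l a b)) with hC
  set θf : Fin 4 → Fin 4 → Fin d → ℝ := fun a b k =>
    if k = i then Real.pi/2 * (a:ℕ) else if k = j then Real.pi/2 * (b:ℕ) else 0 with hθf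
  have he : ∀ (a b : Fin 4) (k : Fin d),
      Complex.exp (Complex.I * (θf a b k : ℝ)) = f k a b := by
    intro a b k
    simp only [hθf, hf]
    by_cases h1 : k = i
    · rw [if_pos h1, if_pos h1, expI_pow]
    · rw [if_neg h1, if_neg h1]
      by_cases h2 : k = j
      · rw [if_pos h2, if_pos h2, expI_pow]
      · rw [if_neg h2, if_neg h2]
        simp
  -- weighted sum vanishes
  have hT : ∑ k, ∑ l, C k l * X k l = 0 := by
    have hstep : ∀ a b : Fin 4,
        ∑ k, ∑ l, star ((Complex.I)^(a:ℕ)) * Complex.I^(b:ℕ) *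
          (f k a b * star (f l a b)) * X k l = 0 := by
      intro a b
      have h0 := hS (θf a b)
      simp only [he] at h0
      calc ∑ k, ∑ l, star ((Complex.I)^(a:ℕ)) * Complex.I^(b:ℕ) *
            (f k a b * star (f l a b)) * X k l
          = star ((Complex.I)^(a:ℕ)) * Complex.I^(b:ℕ) *
            ∑ k, ∑ l, f k a b * star (f l a b) * X k l := by
            rw [Finset.mul_sum]
            refine Finset.sum_congr rfl fun k _ => ?_
            rw [Finset.mul_sum]
            exact Finset.sum_congr rfl fun l _ => by ring
        _ = 0 := by rw [h0, mul_zero]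
    calc ∑ k, ∑ l, C k l * X k l
        = ∑ k, ∑ l, ∑ a : Fin 4, ∑ b : Fin 4,
            star ((Complex.I)^(a:ℕ)) * Complex.I^(b:ℕ) *
              (f k a b * star (f l a b)) * X k l := by
          refine Finset.sum_congr rfl fun k _ => Finset.sum_congr rfl fun l _ => ?_
          rw [hC]
          rw [Finset.sum_mul]
          exact Finset.sum_congr rfl fun a _ => by rw [Finset.sum_mul]
      _ = ∑ a : Fin 4, ∑ b : Fin 4, ∑ k, ∑ l,
            star ((Complex.I)^(a:ℕ)) * Complex.I^(b:ℕ) *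
              (f k a b * star (f l a b)) * X k l := comm4 _
      _ = 0 := Finset.sum_eq_zero fun a _ => Finset.sum_eq_zero fun b _ => hstep a b
  -- compute C in the various cases
  have hCij : C i j = 16 := by
    simp only [hC, hf, if_pos rfl, if_neg (Ne.symm hij)]
    exact csum1
  have hCzero : ∀ k l : Fin d, k ≠ l → ¬(k = i ∧ l = j) → C k l = 0 := by
    intro k l hkl hnot
    by_cases hki : k = i
    · subst hki
      by_cases hlj : l = j
      · exact absurd ⟨rfl, hlj⟩ hnot
      · have hli : ¬ l = k := fun h => hkl (h.symm)
        simp only [hC, hf, if_pos rfl, if_neg hli, if_neg hlj]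
        exact csum3
    · by_cases hkj : k = j
      · subst hkj
        by_cases hli : l = i
        · subst hli
          simp only [hC, hf, if_neg hki, if_pos rfl]
          exact csum2
        · have hlj : ¬ l = k := fun h => hkl h.symm
          simp only [hC, hf, if_neg hki, if_pos rfl, if_neg hli, if_neg hlj]
          exact csum4
      · by_cases hli : l = i
        · subst hli
          simp only [hC, hf, if_neg hki, if_neg hkj, if_pos rfl]
          exact csum5
        · by_cases hlj : l = j
          · subst hlj
            simp only [hC, hf, if_neg hki, if_neg hkj, if_neg hli, if_pos rfl]
            exact csum6
          · simp only [hC, hf, if_neg hki, if_neg hkj, if_neg hli, if_neg hlj]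
            exact csum7
  -- extract X i j
  have hfinal : ∑ k, ∑ l, C k l * X k l = 16 * X i j := by
    rw [Finset.sum_eq_single i]
    · rw [Finset.sum_eq_single j]
      · rw [hCij]
      · intro l _ hlj
        by_cases hli : l = i
        · subst hli; rw [hXdiag, mul_zero]
        · rw [hCzero i l (fun h => hli h.symm) (fun h => hlj h.2), zero_mul]
      · intro h; exact absurd (Finset.mem_univ j) h
    · intro k _ hki
      refine Finset.sum_eq_zero fun l _ => ?_
      by_cases hkl : k = l
      · subst hkl; rw [hXdiag, mul_zero]
      · rw [hCzero k l hkl (fun h => hki h.1), zero_mul]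
    · intro h; exact absurd (Finset.mem_univ i) h
  rw [hT] at hfinal
  have : X i j = 0 := by
    have h16 : (16:ℂ) ≠ 0 := by norm_num
    exact (mul_eq_zero.mp hfinal.symm).resolve_left h16
  simpa [hX] using this
end

section
/- Let Φ be a quantum channel on ℂ^d such that Φ(|i⟩⟨j|) is diagonal in the reference basis for all i, j. Then the Choi state (I ⊗ Φ)(|β⟩⟨β|), where |β⟩ = (1/√d) ∑_i |ii⟩, is separable; hence Φ is an entanglement breaking channel. -/
open Matrix ComplexOrder Kronecker

/-- Let `Φ` be a quantum channel on `ℂ^d` (so its Choi matrix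
`∑_{i,j} |i⟩⟨j| ⊗ Φ(|i⟩⟨j|)` is positive semidefinite) such that `Φ(|i⟩⟨j|)` is diagonal in
the reference basis for all `i, j`. Then the Choi state is separable: it is a sum of
(positive) product operators `ρ_k ⊗ |k⟩⟨k|`; hence `Φ` is entanglement breaking. -/
theorem choi_separable_of_diagonal_outputs (d : ℕ)
    (Φ : Matrix (Fin d) (Fin d) ℂ →ₗ[ℂ] Matrix (Fin d) (Fin d) ℂ)
    (hdiag : ∀ i j : Fin d, (Φ (Matrix.single i j (1 : ℂ))).IsDiag)
    (hchoi : (∑ i, ∑ j, (Matrix.single i j (1 : ℂ)) ⊗ₖ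
        (Φ (Matrix.single i j (1 : ℂ)))).PosSemidef) :
    ∃ ρ : Fin d → Matrix (Fin d) (Fin d) ℂ,
      (∀ k, (ρ k).PosSemidef) ∧
      (∑ i, ∑ j, (Matrix.single i j (1 : ℂ)) ⊗ₖ
          (Φ (Matrix.single i j (1 : ℂ))))
        = ∑ k, (ρ k) ⊗ₖ Matrix.single k k (1 : ℂ) := by
  set C : Matrix (Fin d × Fin d) (Fin d × Fin d) ℂ :=
    ∑ i, ∑ j, (Matrix.single i j (1 : ℂ)) ⊗ₖ
        (Φ (Matrix.single i j (1 : ℂ))) with hCdef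
  have hCentry : ∀ a m b l, C (a, m) (b, l) = Φ (Matrix.single a b (1 : ℂ)) m l := by
    intro a m b l
    simp only [hCdef, Matrix.sum_apply, Matrix.kroneckerMap_apply]
    rw [Finset.sum_eq_single a, Finset.sum_eq_single b]
    · simp [Matrix.single]
    · intro j _ hj; simp [Matrix.single, hj]
    · simp
    · intro i _ hi
      rw [Finset.sum_eq_zero]
      intro j _
      simp [Matrix.single, hi]
    · simp
  refine ⟨fun k => Matrix.of fun a b => Φ (Matrix.single a b (1 : ℂ)) k k, ?_, ?_⟩
  · intro k
    rw [Matrix.posSemidef_iff_dotProduct_mulVec]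
    constructor
    · -- Hermitian
      ext a b
      have := hchoi.1
      have h := congrFun (congrFun this (a, k)) (b, k)
      simp only [Matrix.conjTranspose_apply] at h
      simpa [Matrix.conjTranspose_apply, hCentry] using h
    · intro x
      have h := hchoi.dotProduct_mulVec_nonneg (fun p => if p.2 = k then x p.1 else 0)
      have key : star (fun p : Fin d × Fin d => if p.2 = k then x p.1 else 0) ⬝ᵥ
          C.mulVec (fun p => if p.2 = k then x p.1 else 0)
          = star x ⬝ᵥ (Matrix.of fun a b => Φ (Matrix.single a b (1 : ℂ)) k k).mulVec x := by
        simp only [dotProduct, Matrix.mulVec, Pi.star_apply]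
        rw [Fintype.sum_prod_type]
        simp only [mul_ite, mul_zero, Fintype.sum_prod_type]
        rw [Finset.sum_comm]
        rw [Finset.sum_eq_single k]
        · congr 1; ext a
          rw [Finset.sum_comm, Finset.sum_eq_single k]
          · simp [hCentry, Finset.mul_sum]
          · intro m _ hm; simp [hm]
          · simp
        · intro m _ hm
          simp [hm]
        · simp
      rw [key] at h
      exact h
  · ext ⟨a, m⟩ ⟨b, l⟩
    rw [hCentry]
    simp only [Matrix.sum_apply, Matrix.kroneckerMap_apply, Matrix.of_apply]
    rw [Finset.sum_eq_single m]
    · by_cases hml : m = l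
      · subst hml
        rw [Matrix.single_apply_same, mul_one]
      · have hz : Matrix.single m m (1:ℂ) m l = 0 :=
          Matrix.single_apply_of_ne _ _ _ _ _ (by tauto)
        rw [hz, mul_zero]
        exact hdiag a b hml
    · intro k _ hk
      have hz : Matrix.single k k (1:ℂ) m l = 0 :=
        Matrix.single_apply_of_ne _ _ _ _ _ (by tauto)
      rw [hz, mul_zero]
    · simp
end

section
/- Every coherence breaking channel is a quantum–classical channel: if Φ is an incoherent channel with Φ(ρ) incoherent for all states ρ, then Φ(ρ) = ∑_i |i⟩⟨i| Tr(ρ F_i) for some POVM {F_i} (F_i ≥ 0, ∑_i F_i = I). -/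
open Matrix ComplexOrder

lemma stdBasisMatrix_diag_posSemidef (d : ℕ) (i : Fin d) :
    (Matrix.single i i (1 : ℂ)).PosSemidef := by
  have h : Matrix.single i i (1 : ℂ)
      = (Matrix.single i i (1 : ℂ))ᴴ * Matrix.single i i (1 : ℂ) := by
    ext a b
    simp [Matrix.mul_apply, Matrix.single, Matrix.conjTranspose_apply,
      Finset.sum_ite_eq, apply_ite, ite_and]
    aesop
  rw [h]
  exact Matrix.posSemidef_conjTranspose_mul_self _

lemma sum_stdBasisMatrix_diag (d : ℕ) :
    ∑ i : Fin d, Matrix.single i i (1 : ℂ) = 1 := by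
  ext a b
  simp [Matrix.sum_apply, Matrix.single, Matrix.one_apply, Finset.sum_ite_eq, ite_and]

lemma trace_mul_stdBasisMatrix_diag (d : ℕ) (M : Matrix (Fin d) (Fin d) ℂ) (i : Fin d) :
    (M * Matrix.single i i (1 : ℂ)).trace = M i i := by
  simp [Matrix.trace, Matrix.diag, Matrix.mul_apply, Matrix.single, ite_and,
    Finset.sum_ite_eq]

/-- Every coherence breaking channel is a quantum–classical channel. If a channel
given by Kraus operators `{K_n}` (with `∑ K_n† K_n = I`) is incoherent (each `K_n · K_n†`
maps diagonal matrices to diagonal matrices) and its output `∑ K_n ρ K_n†` is diagonal for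
every density matrix `ρ`, then there is a POVM `{F_i}` (`F_i ≥ 0`, `∑ F_i = I`) with
`Φ(ρ) = ∑_i |i⟩⟨i| Tr(ρ F_i)` on all states `ρ`. -/
theorem coherence_breaking_is_quantum_classical (d N : ℕ)
    (K : Fin N → Matrix (Fin d) (Fin d) ℂ)
    (hcomp : ∑ n, (K n)ᴴ * K n = 1)
    (hinc : ∀ n (A : Matrix (Fin d) (Fin d) ℂ), A.IsDiag → (K n * A * (K n)ᴴ).IsDiag)
    (hcb : ∀ ρ : Matrix (Fin d) (Fin d) ℂ, ρ.PosSemidef → ρ.trace = 1 →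
      (∑ n, K n * ρ * (K n)ᴴ).IsDiag) :
    ∃ F : Fin d → Matrix (Fin d) (Fin d) ℂ,
      (∀ i, (F i).PosSemidef) ∧ (∑ i, F i = 1) ∧
      ∀ ρ : Matrix (Fin d) (Fin d) ℂ, ρ.PosSemidef → ρ.trace = 1 →
        ∑ n, K n * ρ * (K n)ᴴ = ∑ i, (ρ * F i).trace • Matrix.single i i (1 : ℂ) := by
  refine ⟨fun i => ∑ n, (K n)ᴴ * Matrix.single i i (1 : ℂ) * K n, ?_, ?_, ?_⟩
  · intro i
    refine Finset.sum_induction _ _ (fun a b ha hb => ha.add hb) (Matrix.PosSemidef.zero) ?_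
    intro n _
    exact (stdBasisMatrix_diag_posSemidef d i).conjTranspose_mul_mul_same (K n)
  · rw [Finset.sum_comm]
    rw [← hcomp]
    refine Finset.sum_congr rfl fun n _ => ?_
    rw [← Finset.sum_mul, ← Finset.mul_sum, sum_stdBasisMatrix_diag, mul_one]
  · intro ρ hρ hρ1
    have hdiag := hcb ρ hρ hρ1
    have htr : ∀ i, (ρ * ∑ n, (K n)ᴴ * Matrix.single i i (1 : ℂ) * K n).trace
        = (∑ n, K n * ρ * (K n)ᴴ) i i := by
      intro i
      rw [Finset.mul_sum, Matrix.trace_sum]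
      rw [Matrix.sum_apply]
      refine Finset.sum_congr rfl fun n _ => ?_
      have : ρ * ((K n)ᴴ * Matrix.single i i (1 : ℂ) * K n)
          = ρ * (K n)ᴴ * Matrix.single i i (1 : ℂ) * K n := by
        simp only [Matrix.mul_assoc]
      rw [this, Matrix.trace_mul_comm, ← Matrix.mul_assoc,
        trace_mul_stdBasisMatrix_diag]
      simp [Matrix.mul_assoc]
    ext a b
    simp only [Matrix.sum_apply]
    by_cases hab : a = b
    · subst hab
      rw [Finset.sum_eq_single a (fun j _ hj => by
          simp [Matrix.single, Matrix.smul_apply, hj]) (by simp)]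
      have h := htr a
      rw [Matrix.sum_apply] at h
      simp only [Matrix.smul_apply, Matrix.single_apply_same, smul_eq_mul, mul_one]
      exact h.symm
    · have h0 : (∑ n, K n * ρ * (K n)ᴴ) a b = 0 := hdiag hab
      rw [Matrix.sum_apply] at h0
      rw [h0]
      symm
      refine Finset.sum_eq_zero fun j _ => ?_
      simp only [Matrix.smul_apply, smul_eq_mul]
      rw [Matrix.single_apply_of_ne]
      · ring
      · aesop
end

section
/- A quantum channel Φ on ℂ^d is both strictly incoherent and coherence breaking if and only if it admits a Kraus representation {K_{ij}} with K_{ij} = d_{ij} |π_i(j)⟩⟨j|, where each π_i is a permutation of {0,…,d−1} and ∑_i |d_{ij}|² = 1 for each j. -/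
open Matrix ComplexOrder

variable {d : ℕ}

/-- outer product |v⟩⟨v| -/
def outer (v : Fin d → ℂ) : Matrix (Fin d) (Fin d) ℂ := Matrix.of fun a b => v a * star (v b)

lemma outer_posSemidef (v : Fin d → ℂ) : (outer v).PosSemidef := by
  have h : outer v = (Matrix.of (fun (_ : Fin 1) b => star (v b)))ᴴ *
      (Matrix.of fun (_ : Fin 1) b => star (v b)) := by
    ext a b
    simp [outer, Matrix.mul_apply, mul_comm]
  rw [h]
  exact Matrix.posSemidef_conjTranspose_mul_self _

lemma outer_trace (v : Fin d → ℂ) : (outer v).trace = ((∑ a, Complex.normSq (v a) : ℝ) : ℂ) := by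
  simp [Matrix.trace, outer, Matrix.diag, Complex.mul_conj]

lemma outer_smul (cc : ℂ) (v : Fin d → ℂ) :
    outer (cc • v) = (cc * star cc) • outer v := by
  ext a b
  simp [outer, star_mul']
  ring


/-- The SIO-form Kraus operator. -/
def sioM (c : Fin d → ℂ) (π : Equiv.Perm (Fin d)) : Matrix (Fin d) (Fin d) ℂ :=
  Matrix.of fun a b => if a = π b then c b else 0

lemma perm_sum {M : Type*} [AddCommMonoid M] (π : Equiv.Perm (Fin d)) (a : Fin d)
    (f : Fin d → M) : ∑ j, (if a = π j then f j else 0) = f (π⁻¹ a) := by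
  rw [Fintype.sum_eq_single (π⁻¹ a)]
  · simp
  · intro j hj
    rw [if_neg]
    intro h
    exact hj (by simp [h])

lemma sioM_mul_mul (c : Fin d → ℂ) (π : Equiv.Perm (Fin d))
    (ρ : Matrix (Fin d) (Fin d) ℂ) (a b : Fin d) :
    (sioM c π * ρ * (sioM c π)ᴴ) a b
      = c (π⁻¹ a) * star (c (π⁻¹ b)) * ρ (π⁻¹ a) (π⁻¹ b) := by
  simp only [Matrix.mul_apply, Matrix.conjTranspose_apply, sioM, Matrix.of_apply]
  simp only [apply_ite (star : ℂ → ℂ), star_zero, mul_ite, mul_zero]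
  rw [perm_sum]
  rw [show (∑ x, (if a = π x then c x else 0) * ρ x (π⁻¹ b)) =
      ∑ x, (if a = π x then c x * ρ x (π⁻¹ b) else 0) by
    exact Finset.sum_congr rfl fun x _ => by split_ifs <;> simp]
  rw [perm_sum]
  ring

lemma sioM_conjMul_diag (c : Fin d → ℂ) (π : Equiv.Perm (Fin d)) (j : Fin d) :
    ((sioM c π)ᴴ * sioM c π) j j = star (c j) * c j := by
  simp only [Matrix.mul_apply, Matrix.conjTranspose_apply, sioM, Matrix.of_apply]
  rw [show (∑ x, star (if x = π j then c j else 0) * (if x = π j then c j else 0)) =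
      ∑ x, (if x = π j then star (c j) * c j else 0) by
    exact Finset.sum_congr rfl fun x _ => by split_ifs <;> simp]
  simp

lemma conjT_stdBasis (i j : Fin d) :
    (Matrix.single i j (1 : ℂ))ᴴ = Matrix.single j i 1 := by
  ext a b
  simp [Matrix.conjTranspose_apply, Matrix.single, and_comm]

lemma K_mul_mul (cc : ℂ) (i j : Fin d) (ρ : Matrix (Fin d) (Fin d) ℂ) (a b : Fin d) :
    ((cc • Matrix.single i j (1 : ℂ)) * ρ *
        (cc • Matrix.single i j (1 : ℂ))ᴴ) a b
      = if a = i ∧ b = i then cc * star cc * ρ j j else 0 := by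
  rw [Matrix.conjTranspose_smul, conjT_stdBasis]
  simp only [Matrix.smul_mul, Matrix.mul_smul, Matrix.smul_apply, smul_eq_mul]
  simp only [Matrix.mul_apply, Matrix.single, Matrix.of_apply]
  simp only [ite_mul, mul_ite, one_mul, mul_one, zero_mul, mul_zero,
    Finset.sum_ite_eq, Finset.sum_ite_eq']
  by_cases h1 : a = i <;> by_cases h2 : b = i <;>
    [skip; skip; skip; skip] <;>
    first
    | (have h1' : ¬ i = a := fun h => h1 h.symm
       simp [h1, h1'])
    | (have h2' : ¬ i = b := fun h => h2 h.symm
       simp [h2, h2'])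
    | (simp [h1, h2, Finset.sum_ite_eq, Finset.sum_ite_eq']; ring)

lemma K_conjMul (cc : ℂ) (i j : Fin d) :
    (cc • Matrix.single i j (1 : ℂ))ᴴ * (cc • Matrix.single i j (1 : ℂ))
      = (star cc * cc) • Matrix.single j j 1 := by
  rw [Matrix.conjTranspose_smul, conjT_stdBasis, Matrix.smul_mul, Matrix.mul_smul,
    Matrix.single_mul_single_same, smul_smul, one_mul]

lemma sioM_single (cc : ℂ) (j : Fin d) (π : Equiv.Perm (Fin d)) :
    sioM (fun b => if b = j then cc else 0) π = cc • Matrix.single (π j) j 1 := by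
  ext a b
  simp only [sioM, Matrix.of_apply, Matrix.smul_apply, Matrix.single,
    smul_eq_mul]
  by_cases hb : b = j
  · subst hb
    by_cases ha : a = π b
    · simp [ha]
    · rw [if_neg ha, if_neg (fun h : π b = a ∧ b = b => ha h.1.symm), mul_zero]
  · rw [if_neg (fun h : π j = a ∧ j = b => hb h.2.symm), mul_zero]
    split_ifs with h1 h2 <;> simp_all

lemma stdBasis_decomp (j k : Fin d) :
    Matrix.single j k (1 : ℂ) =
      (2 : ℂ)⁻¹ • (outer (fun b => (if j = b then 1 else 0) + (if k = b then 1 else 0))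
        + Complex.I • outer (fun b => (if j = b then 1 else 0) + Complex.I * (if k = b then 1 else 0))
        - (1 + Complex.I) • (outer (fun b => if j = b then 1 else 0)
            + outer (fun b => if k = b then 1 else 0))) := by
  ext a b
  simp only [outer, Matrix.single, Matrix.smul_apply, Matrix.sub_apply,
    Matrix.add_apply, Matrix.of_apply, smul_eq_mul, star_add, star_mul', Complex.star_def,
    apply_ite (starRingEnd ℂ), _root_.map_one, _root_.map_zero, Complex.conj_I]
  by_cases h1 : j = a <;> by_cases h2 : k = a <;> by_cases h3 : j = b <;>
    by_cases h4 : k = b <;>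
    simp only [h1, h2, h3, h4, if_true, if_false, and_self, and_true, true_and,
      and_false, false_and, if_pos, if_neg, not_false_iff] <;>
    simp_all [Complex.ext_iff] <;> norm_num

/-- The linear map given by a Kraus family. -/
noncomputable def krausMap {N : ℕ} (M : Fin N → Matrix (Fin d) (Fin d) ℂ) :
    Matrix (Fin d) (Fin d) ℂ →ₗ[ℂ] Matrix (Fin d) (Fin d) ℂ where
  toFun ρ := ∑ n, M n * ρ * (M n)ᴴ
  map_add' ρ σ := by
    simp [Matrix.mul_add, Matrix.add_mul, Finset.sum_add_distrib]
  map_smul' r ρ := by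
    simp [Matrix.mul_smul, Matrix.smul_mul, Finset.smul_sum]

/-- If a linear map sends all density matrices to diagonal matrices, it sends everything
to diagonal matrices. -/
lemma all_diag (L : Matrix (Fin d) (Fin d) ℂ →ₗ[ℂ] Matrix (Fin d) (Fin d) ℂ)
    (h : ∀ ρ : Matrix (Fin d) (Fin d) ℂ, ρ.PosSemidef → ρ.trace = 1 → (L ρ).IsDiag) :
    ∀ ρ, (L ρ).IsDiag := by
  classical
  -- the set of matrices sent to diagonal ones is a submodule
  set S : Submodule ℂ (Matrix (Fin d) (Fin d) ℂ) :=
    { carrier := {ρ | (L ρ).IsDiag}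
      add_mem' := fun {x y} hx hy => by
        simp only [Set.mem_setOf_eq, map_add] at *
        exact hx.add hy
      zero_mem' := by
        simp only [Set.mem_setOf_eq, map_zero]
        exact Matrix.isDiag_zero
      smul_mem' := fun r x hx => by
        simp only [Set.mem_setOf_eq, L.map_smul] at *
        exact hx.smul r } with hS
  have hmem : ∀ x, x ∈ S ↔ (L x).IsDiag := fun x => Iff.rfl
  -- every outer product is in S
  have houter : ∀ v : Fin d → ℂ, outer v ∈ S := by
    intro v
    by_cases hv : v = 0
    · have : outer v = 0 := by ext a b; simp [outer, hv]
      rw [this]; exact S.zero_mem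
    · set t : ℝ := ∑ a, Complex.normSq (v a) with ht
      have htpos : 0 < t := by
        rw [ht]
        obtain ⟨a, ha⟩ := Function.ne_iff.mp hv
        exact Finset.sum_pos' (fun i _ => Complex.normSq_nonneg _)
          ⟨a, Finset.mem_univ a, by simpa using Complex.normSq_pos.mpr ha⟩
      set w : Fin d → ℂ := ((Real.sqrt t : ℝ) : ℂ)⁻¹ • v with hw
      have hvw : outer v = (t : ℂ) • outer w := by
        rw [hw, outer_smul]
        rw [smul_smul]
        rw [show ((((Real.sqrt t : ℝ) : ℂ))⁻¹ * star (((Real.sqrt t : ℝ) : ℂ))⁻¹) = ((t : ℝ) : ℂ)⁻¹ by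
          rw [Complex.star_def, map_inv₀, Complex.conj_ofReal, ← mul_inv,
            ← Complex.ofReal_mul, Real.mul_self_sqrt htpos.le]]
        rw [mul_inv_cancel₀ (by exact_mod_cast ne_of_gt htpos), one_smul]
      have hwps : (outer w).PosSemidef := outer_posSemidef w
      have hwtr : (outer w).trace = 1 := by
        rw [outer_trace]
        have : ∀ a, Complex.normSq (w a) = t⁻¹ * Complex.normSq (v a) := by
          intro a
          rw [hw]
          simp only [Pi.smul_apply, smul_eq_mul, Complex.normSq_mul]
          congr 1
          rw [show (((Real.sqrt t : ℝ) : ℂ))⁻¹ = ((Real.sqrt t)⁻¹ : ℝ) by push_cast; ring]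
          rw [Complex.normSq_ofReal]
          rw [← mul_inv, Real.mul_self_sqrt htpos.le]
        simp only [this, ← Finset.mul_sum, ← ht]
        rw [inv_mul_cancel₀ (ne_of_gt htpos)]
        norm_num
      rw [hmem, hvw, L.map_smul]
      exact (h _ hwps hwtr).smul _
  -- std basis matrices are in S
  have hstd : ∀ j k : Fin d, Matrix.single j k (1 : ℂ) ∈ S := by
    intro j k
    rw [stdBasis_decomp j k]
    exact S.smul_mem _ (S.sub_mem (S.add_mem (houter _) (S.smul_mem _ (houter _)))
      (S.smul_mem _ (S.add_mem (houter _) (houter _))))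
  intro ρ
  rw [← hmem]
  have hρ : ρ = ∑ j, ∑ k, (ρ j k) • Matrix.single j k (1 : ℂ) := by
    conv_lhs => rw [Matrix.matrix_eq_sum_single ρ]
    refine Finset.sum_congr rfl fun j _ => Finset.sum_congr rfl fun k _ => ?_
    rw [Matrix.smul_single, smul_eq_mul, mul_one]
  rw [hρ]
  exact Submodule.sum_mem _ fun j _ => Submodule.sum_mem _ fun k _ =>
    S.smul_mem _ (hstd j k)

lemma sum_prod_equiv {α : Type*} [AddCommMonoid α] (N d : ℕ) (f : Fin N → Fin d → α) :
    ∑ m : Fin (N * d), f (finProdFinEquiv.symm m).1 (finProdFinEquiv.symm m).2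
      = ∑ n, ∑ j, f n j := by
  rw [show (∑ n, ∑ j, f n j) = ∑ p : Fin N × Fin d, f p.1 p.2 by
    rw [Fintype.sum_prod_type]]
  exact Equiv.sum_comp finProdFinEquiv.symm (fun p => f p.1 p.2)

lemma kraus_sum_one {N : ℕ} (c : Fin N → Fin d → ℂ) (π : Fin N → Equiv.Perm (Fin d))
    (hnorm : ∀ j, ∑ n, Complex.normSq (c n j) = 1) :
    ∑ n, ∑ j, (c n j • Matrix.single (π n j) j (1 : ℂ))ᴴ *
      (c n j • Matrix.single (π n j) j (1 : ℂ)) = 1 := by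
  simp only [K_conjMul]
  ext a b
  simp only [Matrix.sum_apply, Matrix.smul_apply, Matrix.single, Matrix.of_apply,
    smul_eq_mul, mul_ite, mul_one, mul_zero]
  by_cases hab : a = b
  · subst hab
    simp only [and_self]
    rw [Finset.sum_congr rfl (fun n _ => Finset.sum_ite_eq' Finset.univ a
      (fun j => star (c n j) * c n j))]
    simp only [Finset.mem_univ, if_true, Matrix.one_apply_eq]
    have hc : ∀ n, star (c n a) * c n a = ((Complex.normSq (c n a) : ℝ) : ℂ) := by
      intro n
      rw [Complex.star_def, mul_comm, Complex.mul_conj]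
    simp only [hc]
    rw [← Complex.ofReal_sum]
    rw [hnorm a]
    norm_num
  · rw [Matrix.one_apply_ne hab]
    refine Finset.sum_eq_zero fun n _ => Finset.sum_eq_zero fun j _ => ?_
    rw [if_neg]
    rintro ⟨h1, h2⟩
    exact hab (h1.symm.trans h2)

def IsSIO {d : ℕ} (Φ : Matrix (Fin d) (Fin d) ℂ → Matrix (Fin d) (Fin d) ℂ) : Prop :=
  ∃ (N : ℕ) (c : Fin N → Fin d → ℂ) (π : Fin N → Equiv.Perm (Fin d)),
    (∑ n, (Matrix.of fun a b => if a = π n b then c n b else 0)ᴴ *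
        (Matrix.of fun a b => if a = π n b then c n b else 0) = 1) ∧
    ∀ ρ, Φ ρ = ∑ n, (Matrix.of fun a b => if a = π n b then c n b else 0) * ρ *
        (Matrix.of fun a b => if a = π n b then c n b else 0)ᴴ

def IsCBCfn {d : ℕ} (Φ : Matrix (Fin d) (Fin d) ℂ → Matrix (Fin d) (Fin d) ℂ) : Prop :=
  (∃ (N : ℕ) (K : Fin N → Matrix (Fin d) (Fin d) ℂ),
    (∑ n, (K n)ᴴ * K n = 1) ∧
    (∀ n (A : Matrix (Fin d) (Fin d) ℂ), A.IsDiag → (K n * A * (K n)ᴴ).IsDiag) ∧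
    ∀ ρ, Φ ρ = ∑ n, K n * ρ * (K n)ᴴ) ∧
  ∀ ρ : Matrix (Fin d) (Fin d) ℂ, ρ.PosSemidef → ρ.trace = 1 → (Φ ρ).IsDiag

/-- A quantum channel `Φ` on `ℂ^d` is both strictly incoherent and coherence
breaking if and only if it admits a Kraus representation `{K_{nj}}` with
`K_{nj} = d_{nj} |π_n(j)⟩⟨j|`, where each `π_n` is a permutation of `{0,…,d−1}` and
`∑_n |d_{nj}|² = 1` for each `j`. -/
theorem sio_and_cbc_iff (d : ℕ)
    (Φ : Matrix (Fin d) (Fin d) ℂ → Matrix (Fin d) (Fin d) ℂ) :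
    (IsSIO Φ ∧ IsCBCfn Φ) ↔
      ∃ (N : ℕ) (c : Fin N → Fin d → ℂ) (π : Fin N → Equiv.Perm (Fin d)),
        (∀ j, ∑ n, Complex.normSq (c n j) = 1) ∧
        ∀ ρ, Φ ρ = ∑ n, ∑ j,
          (c n j • Matrix.single (π n j) j (1 : ℂ)) * ρ *
            (c n j • Matrix.single (π n j) j (1 : ℂ))ᴴ := by
  constructor
  · rintro ⟨⟨N, c, π, hnorm, hrep⟩, ⟨-, hdg⟩⟩
    have hnorm' : ∑ n, (sioM (c n) (π n))ᴴ * sioM (c n) (π n) = 1 := hnorm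
    have hrep' : ∀ ρ, Φ ρ = ∑ n, sioM (c n) (π n) * ρ * (sioM (c n) (π n))ᴴ := hrep
    refine ⟨N, c, π, ?_, ?_⟩
    · intro j
      have h1 := congrArg (fun A : Matrix (Fin d) (Fin d) ℂ => A j j) hnorm'
      simp only [Matrix.sum_apply, sioM_conjMul_diag, Matrix.one_apply_eq] at h1
      have hc : ∀ n, star (c n j) * c n j = ((Complex.normSq (c n j) : ℝ) : ℂ) := fun n => by
        rw [Complex.star_def, mul_comm, Complex.mul_conj]
      rw [Finset.sum_congr rfl (fun n _ => hc n), ← Complex.ofReal_sum] at h1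
      exact_mod_cast h1
    · intro ρ
      have hΦ : ∀ σ, Φ σ = krausMap (fun n => sioM (c n) (π n)) σ := fun σ => hrep' σ
      have hdiagall : ∀ σ, (Φ σ).IsDiag := by
        intro σ
        rw [hΦ σ]
        exact all_diag _ (fun τ hps htr => by rw [← hΦ τ]; exact hdg τ hps htr) σ
      ext a b
      by_cases hab : a = b
      · subst hab
        rw [hrep' ρ, Matrix.sum_apply, Matrix.sum_apply]
        refine Finset.sum_congr rfl fun n _ => ?_
        rw [sioM_mul_mul, Matrix.sum_apply]
        simp only [K_mul_mul, and_self]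
        rw [perm_sum (π n) a (fun j => c n j * star (c n j) * ρ j j)]
      · rw [show (Φ ρ) a b = 0 from hdiagall ρ hab, Matrix.sum_apply]
        symm
        refine Finset.sum_eq_zero fun n _ => ?_
        rw [Matrix.sum_apply]
        refine Finset.sum_eq_zero fun j _ => ?_
        rw [K_mul_mul, if_neg]
        rintro ⟨h1, h2⟩
        exact hab (h1.trans h2.symm)
  · rintro ⟨N, c, π, hnorm, hrep⟩
    have hone : ∑ n, ∑ j, (c n j • Matrix.single (π n j) j (1 : ℂ))ᴴ *
        (c n j • Matrix.single (π n j) j (1 : ℂ)) = 1 := kraus_sum_one c π hnorm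
    constructor
    · refine ⟨N * d, fun m b => if b = (finProdFinEquiv.symm m).2 then
          c (finProdFinEquiv.symm m).1 (finProdFinEquiv.symm m).2 else 0,
        fun m => π (finProdFinEquiv.symm m).1, ?_, ?_⟩
      · show ∑ m, (sioM _ (π (finProdFinEquiv.symm m).1))ᴴ *
            sioM _ (π (finProdFinEquiv.symm m).1) = 1
        rw [Finset.sum_congr rfl fun m (_ : m ∈ Finset.univ) => by
          rw [sioM_single (c (finProdFinEquiv.symm m).1 (finProdFinEquiv.symm m).2)
            (finProdFinEquiv.symm m).2 (π (finProdFinEquiv.symm m).1)]]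
        rw [sum_prod_equiv N d (fun n j => (c n j • Matrix.single (π n j) j (1 : ℂ))ᴴ *
          (c n j • Matrix.single (π n j) j (1 : ℂ)))]
        exact hone
      · intro ρ
        show Φ ρ = ∑ m, sioM _ (π (finProdFinEquiv.symm m).1) * ρ *
            (sioM _ (π (finProdFinEquiv.symm m).1))ᴴ
        rw [hrep ρ, ← sum_prod_equiv N d (fun n j =>
          (c n j • Matrix.single (π n j) j (1 : ℂ)) * ρ *
            (c n j • Matrix.single (π n j) j (1 : ℂ))ᴴ)]
        refine Finset.sum_congr rfl fun m _ => ?_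
        rw [sioM_single]
    · constructor
      · refine ⟨N * d, fun m => c (finProdFinEquiv.symm m).1 (finProdFinEquiv.symm m).2 •
            Matrix.single (π (finProdFinEquiv.symm m).1 (finProdFinEquiv.symm m).2)
              (finProdFinEquiv.symm m).2 (1 : ℂ), ?_, ?_, ?_⟩
        · rw [sum_prod_equiv N d (fun n j => (c n j • Matrix.single (π n j) j (1 : ℂ))ᴴ *
            (c n j • Matrix.single (π n j) j (1 : ℂ)))]
          exact hone
        · intro m A _
          intro a b hab
          rw [K_mul_mul, if_neg]
          rintro ⟨h1, h2⟩
          exact hab (h1.trans h2.symm)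
        · intro ρ
          rw [hrep ρ, ← sum_prod_equiv N d (fun n j =>
            (c n j • Matrix.single (π n j) j (1 : ℂ)) * ρ *
              (c n j • Matrix.single (π n j) j (1 : ℂ))ᴴ)]
      · intro ρ _ _
        intro a b hab
        rw [hrep ρ, Matrix.sum_apply]
        refine Finset.sum_eq_zero fun n _ => ?_
        rw [Matrix.sum_apply]
        refine Finset.sum_eq_zero fun j _ => ?_
        rw [K_mul_mul, if_neg]
        rintro ⟨h1, h2⟩
        exact hab (h1.trans h2.symm)
end

section
/- A quantum channel Φ on ℂ^d is both dephasing-covariant and coherence breaking if and only if it admits Kraus operators K_{ij} = √p_{ij} |i⟩⟨j| with p_{ij} ≥ 0 and ∑_{i=0}^{d−1} p_{ij} = 1 for each j; equivalently, Φ(ρ) = ∑_i |i⟩⟨i| Tr(ρ F_i) with each F_i diagonal, F_i = ∑_j p_{ij}|j⟩⟨j|. -/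
open Matrix ComplexOrder

/-- The dephasing map `Δ(ρ) = ∑_i ⟨i|ρ|i⟩ |i⟩⟨i|`. -/
def deph {d : ℕ} (ρ : Matrix (Fin d) (Fin d) ℂ) : Matrix (Fin d) (Fin d) ℂ :=
  Matrix.diagonal fun i => ρ i i

/-- A quantum channel: admits a Kraus decomposition with the completeness relation. -/
def IsChannel {d : ℕ} (Φ : Matrix (Fin d) (Fin d) ℂ → Matrix (Fin d) (Fin d) ℂ) : Prop :=
  ∃ (N : ℕ) (K : Fin N → Matrix (Fin d) (Fin d) ℂ),
    (∑ n, (K n)ᴴ * K n = 1) ∧ ∀ ρ, Φ ρ = ∑ n, K n * ρ * (K n)ᴴ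

/-- A dephasing-covariant operation (DIO): a channel commuting with the dephasing map. -/
def IsDIO {d : ℕ} (Φ : Matrix (Fin d) (Fin d) ℂ → Matrix (Fin d) (Fin d) ℂ) : Prop :=
  IsChannel Φ ∧ ∀ ρ, deph (Φ ρ) = Φ (deph ρ)

noncomputable section

/-- The Kraus map as a linear map. -/
def krausLM {d N : ℕ} (K : Fin N → Matrix (Fin d) (Fin d) ℂ) :
    Matrix (Fin d) (Fin d) ℂ →ₗ[ℂ] Matrix (Fin d) (Fin d) ℂ where
  toFun ρ := ∑ n, K n * ρ * (K n)ᴴ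
  map_add' ρ σ := by simp [Matrix.mul_add, Matrix.add_mul, Finset.sum_add_distrib]
  map_smul' c ρ := by simp [mul_smul_comm, smul_mul_assoc, Finset.smul_sum]

lemma sum_isDiag {d N : ℕ} (f : Fin N → Matrix (Fin d) (Fin d) ℂ)
    (h : ∀ n, (f n).IsDiag) : (∑ n, f n).IsDiag := by
  intro i j hij
  simp only [Matrix.sum_apply]
  exact Finset.sum_eq_zero fun n _ => h n hij

lemma isDiag_stdBasis {d : ℕ} (i : Fin d) : (Matrix.single i i (1:ℂ)).IsDiag := by
  intro a b hab
  by_cases ha : i = a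
  · subst ha; simp [hab, Ne.symm]
  · simp [Matrix.single_apply_of_row_ne ha]

lemma eq_sum_diag {d : ℕ} {A : Matrix (Fin d) (Fin d) ℂ} (h : A.IsDiag) :
    A = ∑ i, A i i • Matrix.single i i (1:ℂ) := by
  ext a b
  simp only [Matrix.sum_apply, Matrix.smul_apply, smul_eq_mul]
  by_cases hab : a = b
  · subst hab
    rw [Finset.sum_eq_single a] <;> simp +contextual [Matrix.single, Ne.symm]
  · rw [h hab]
    refine (Finset.sum_eq_zero fun i _ => ?_).symm
    rcases ne_or_eq i a with hia | rfl
    · simp [Matrix.single_apply_of_row_ne hia]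
    · simp [Matrix.single_apply_of_col_ne _ _ hab]

lemma mul_std_mul_conj {d : ℕ} (A : Matrix (Fin d) (Fin d) ℂ) (j a b : Fin d) :
    (A * Matrix.single j j (1:ℂ) * Aᴴ) a b = A a j * star (A b j) := by
  rw [Matrix.mul_assoc, Matrix.mul_apply]
  rw [Finset.sum_eq_single j]
  · simp [Matrix.conjTranspose_apply]
  · intro c _ hc
    rw [Matrix.single_mul_apply_of_ne (h := hc), mul_zero]
  · simp

lemma psd_outer {d : ℕ} (u : Fin d → ℂ) : (Matrix.vecMulVec u (star u)).PosSemidef := by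
  refine Matrix.PosSemidef.of_dotProduct_mulVec_nonneg ?_ ?_
  · ext a b
    simp [Matrix.vecMulVec_apply, Matrix.conjTranspose_apply, mul_comm]
  · intro x
    have hmv : Matrix.vecMulVec u (star u) *ᵥ x = (star u ⬝ᵥ x) • u := by
      ext a
      simp [Matrix.mulVec, Matrix.vecMulVec_apply, dotProduct, Finset.mul_sum, mul_comm,
        mul_assoc, mul_left_comm]
    rw [hmv]
    have : star x ⬝ᵥ (star u ⬝ᵥ x) • u = (star u ⬝ᵥ x) * star (star u ⬝ᵥ x) := by
      rw [dotProduct_smul]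
      simp [dotProduct, Finset.mul_sum, star_sum, mul_comm]
    rw [this]
    exact mul_star_self_nonneg _

end

section More
variable {d : ℕ}

lemma stdBasis_conjTranspose (i j : Fin d) :
    (Matrix.single i j (1:ℂ))ᴴ = Matrix.single j i 1 := by
  ext a b
  simp [Matrix.conjTranspose_apply, Matrix.single, and_comm]

lemma basis_conj (ρ : Matrix (Fin d) (Fin d) ℂ) (i j : Fin d) :
    Matrix.single i j (1:ℂ) * ρ * Matrix.single j i (1:ℂ)
      = ρ j j • Matrix.single i i 1 := by
  ext a b
  rcases eq_or_ne a i with rfl | ha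
  · rcases eq_or_ne b a with rfl | hb
    · rw [Matrix.mul_single_apply_same, Matrix.single_mul_apply_same]
      simp
    · rw [Matrix.mul_single_apply_of_ne (hbj := hb)]
      simp [Ne.symm hb]
  · rw [Matrix.mul_apply]
    rw [Finset.sum_eq_zero fun c _ => by
      rw [Matrix.single_mul_apply_of_ne (h := ha), zero_mul]]
    simp [Ne.symm ha]

lemma sum_stdBasis_eq_one : (∑ j, Matrix.single j j (1:ℂ)) = (1 : Matrix (Fin d) (Fin d) ℂ) := by
  have h := eq_sum_diag (Matrix.isDiag_one (n := Fin d) (α := ℂ))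
  simpa using h.symm

lemma deph_of_isDiag {A : Matrix (Fin d) (Fin d) ℂ} (h : A.IsDiag) :
    Matrix.diagonal (fun i => A i i) = A := by
  ext a b
  rcases eq_or_ne a b with rfl | hab
  · simp
  · rw [Matrix.diagonal_apply_ne _ hab, (h hab).symm]

end More

section OffDiag
variable {d : ℕ}

set_option maxHeartbeats 2000000 in
lemma phi_off_eq_zero (Φ : Matrix (Fin d) (Fin d) ℂ → Matrix (Fin d) (Fin d) ℂ)
    (hlin : ∀ (c₁ c₂ c₃ c₄ : ℂ) (A B C D : Matrix (Fin d) (Fin d) ℂ),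
      Φ (c₁ • A + c₂ • B + c₃ • C + c₄ • D) = c₁ • Φ A + c₂ • Φ B + c₃ • Φ C + c₄ • Φ D)
    (hdens : ∀ ρ : Matrix (Fin d) (Fin d) ℂ, ρ.PosSemidef → ρ.trace = 1 → (Φ ρ).IsDiag)
    (hdeph : ∀ j k : Fin d, j ≠ k → ∀ i, (Φ (Matrix.single j k 1)) i i = 0)
    (hdiagE : ∀ j : Fin d, (Φ (Matrix.single j j 1)).IsDiag)
    (j k : Fin d) (hjk : j ≠ k) : Φ (Matrix.single j k 1) = 0 := by
  set c : ℂ := ((Real.sqrt 2 : ℝ)⁻¹ : ℂ) with hc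
  have hhalf : c * c = 1/2 := by
    rw [hc, ← mul_inv, ← Complex.ofReal_mul, Real.mul_self_sqrt (by norm_num)]
    norm_num
  have hsc : star c = c := by
    rw [hc]; simp [Complex.star_def, map_inv₀, Complex.conj_ofReal]
  have hkj : k ≠ j := Ne.symm hjk
  have hjj2 : c * star c = 1/2 := by rw [hsc]; exact hhalf
  have hjk2 : c * star (c * Complex.I) = -(Complex.I)/2 := by
    rw [star_mul', hsc, Complex.star_def, Complex.conj_I]
    linear_combination (-Complex.I) * hhalf
  have hkj2 : (c * Complex.I) * star c = Complex.I/2 := by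
    rw [hsc]; linear_combination Complex.I * hhalf
  have hkk2 : (c * Complex.I) * star (c * Complex.I) = 1/2 := by
    rw [star_mul', hsc, Complex.star_def, Complex.conj_I]
    linear_combination (-(Complex.I*Complex.I)) * hhalf + (-(1/2)) * Complex.I_mul_I
  -- the two rank-one density matrices
  set u₁ : Fin d → ℂ := fun a => if a = j then c else if a = k then c else 0 with hu₁
  set u₂ : Fin d → ℂ := fun a => if a = j then c else if a = k then c * Complex.I else 0 with hu₂
  have hM₁ : Matrix.vecMulVec u₁ (star u₁) =
      (1/2 : ℂ) • Matrix.single j j 1 + (1/2 : ℂ) • Matrix.single j k 1 +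
      (1/2 : ℂ) • Matrix.single k j 1 + (1/2 : ℂ) • Matrix.single k k 1 := by
    ext a b
    simp only [Matrix.vecMulVec_apply, Pi.star_apply, hu₁, Matrix.add_apply, Matrix.smul_apply,
      Matrix.single, Matrix.of_apply, smul_eq_mul]
    by_cases haj : a = j <;> by_cases hak : a = k <;> by_cases hbj : b = j <;>
        by_cases hbk : b = k <;>
      simp_all [hjj2] <;>
      · split_ifs <;> simp_all
  have hM₂ : Matrix.vecMulVec u₂ (star u₂) =
      (1/2 : ℂ) • Matrix.single j j 1 + (-(Complex.I)/2 : ℂ) • Matrix.single j k 1 +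
      (Complex.I/2 : ℂ) • Matrix.single k j 1 + (1/2 : ℂ) • Matrix.single k k 1 := by
    ext a b
    simp only [Matrix.vecMulVec_apply, Pi.star_apply, hu₂, Matrix.add_apply, Matrix.smul_apply,
      Matrix.single, Matrix.of_apply, smul_eq_mul]
    by_cases haj : a = j <;> by_cases hak : a = k <;> by_cases hbj : b = j <;>
        by_cases hbk : b = k <;>
      simp_all [hjj2, hjk2, hkj2, hkk2] <;>
      · split_ifs <;> simp_all
  have htr₁ : (Matrix.vecMulVec u₁ (star u₁)).trace = 1 := by
    rw [hM₁]
    simp [Matrix.trace_add, Matrix.trace_smul, Matrix.trace_single_eq_same,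
      Matrix.trace_single_eq_of_ne _ _ _ (Ne.symm hjk),
      Matrix.trace_single_eq_of_ne _ _ _ hjk]
    norm_num
  have htr₂ : (Matrix.vecMulVec u₂ (star u₂)).trace = 1 := by
    rw [hM₂]
    simp [Matrix.trace_add, Matrix.trace_smul, Matrix.trace_single_eq_same,
      Matrix.trace_single_eq_of_ne _ _ _ (Ne.symm hjk),
      Matrix.trace_single_eq_of_ne _ _ _ hjk]
    norm_num
  have hD₁ := hdens _ (psd_outer u₁) htr₁
  have hD₂ := hdens _ (psd_outer u₂) htr₂
  rw [hM₁, hlin] at hD₁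
  rw [hM₂, hlin] at hD₂
  ext a b
  rcases eq_or_ne a b with rfl | hab
  · rw [hdeph j k hjk a, Matrix.zero_apply]
  · have h₁ := hD₁ hab
    have h₂ := hD₂ hab
    simp only [Matrix.add_apply, Matrix.smul_apply, smul_eq_mul] at h₁ h₂
    rw [hdiagE j hab, hdiagE k hab] at h₁ h₂
    have hIx : Complex.I * ((Φ (Matrix.single j k 1)) a b) = 0 := by
      linear_combination (-(1:ℂ)) * h₂ + Complex.I * h₁
    rcases mul_eq_zero.mp hIx with h | h
    · exact absurd h Complex.I_ne_zero
    · rw [Matrix.zero_apply]; exact h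

end OffDiag

set_option maxHeartbeats 1000000 in
/-- A quantum channel `Φ` on `ℂ^d` is both dephasing-covariant and coherence
breaking if and only if `Φ(ρ) = ∑_i |i⟩⟨i| Tr(ρ F_i)` with each `F_i = ∑_j p_{ij}|j⟩⟨j|`
diagonal, `p_{ij} ≥ 0` and `∑_i p_{ij} = 1` for each `j` (equivalently, `Φ` has Kraus
operators `K_{ij} = √p_{ij}|i⟩⟨j|`). -/
theorem dio_and_cbc_iff (d : ℕ)
    (Φ : Matrix (Fin d) (Fin d) ℂ → Matrix (Fin d) (Fin d) ℂ) :
    (IsDIO Φ ∧ IsCBCfn Φ) ↔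
      ∃ p : Fin d → Fin d → ℝ,
        (∀ i j, 0 ≤ p i j) ∧ (∀ j, ∑ i, p i j = 1) ∧
        ∀ ρ, Φ ρ = ∑ i, (∑ j, (p i j : ℂ) * ρ j j) • Matrix.single i i (1 : ℂ) := by
  constructor
  · rintro ⟨⟨_, hcov⟩, ⟨N, K, hK1, hKdiag, hKrep⟩, hdens⟩
    have hΦ : ∀ ρ, Φ ρ = krausLM K ρ := hKrep
    have hlin : ∀ (c₁ c₂ c₃ c₄ : ℂ) (A B C D : Matrix (Fin d) (Fin d) ℂ),
        Φ (c₁ • A + c₂ • B + c₃ • C + c₄ • D) = c₁ • Φ A + c₂ • Φ B + c₃ • Φ C + c₄ • Φ D := by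
      intro c₁ c₂ c₃ c₄ A B C D
      rw [hΦ, hΦ A, hΦ B, hΦ C, hΦ D]
      simp [map_add, _root_.map_smul]
    have hdiagE : ∀ j : Fin d, (Φ (Matrix.single j j 1)).IsDiag := by
      intro j
      rw [hKrep]
      exact sum_isDiag _ fun n => hKdiag n _ (isDiag_stdBasis j)
    have hdeph0 : ∀ j k : Fin d, j ≠ k → ∀ i, (Φ (Matrix.single j k 1)) i i = 0 := by
      intro j k hjk i
      have h0 : deph (Matrix.single j k (1:ℂ)) = 0 := by
        ext a b
        rcases eq_or_ne a b with rfl | hab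
        · show Matrix.diagonal _ a a = _
          rw [Matrix.diagonal_apply_eq]
          simp [Matrix.single]
          rintro rfl rfl
          exact hjk rfl
        · show Matrix.diagonal _ a b = _
          rw [Matrix.diagonal_apply_ne _ hab]
          simp
      have hc := hcov (Matrix.single j k 1)
      rw [h0, hΦ 0, map_zero] at hc
      have h2 : deph (Φ (Matrix.single j k 1)) i i = (0 : Matrix (Fin d) (Fin d) ℂ) i i := by
        rw [hc]
      simpa [deph] using h2
    have hoff := phi_off_eq_zero Φ hlin hdens hdeph0 hdiagE
    have hEntry : ∀ i j, (Φ (Matrix.single j j (1:ℂ))) i i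
        = ((∑ n, Complex.normSq (K n i j) : ℝ) : ℂ) := by
      intro i j
      rw [hΦ]
      simp only [krausLM, LinearMap.coe_mk, AddHom.coe_mk, Matrix.sum_apply, mul_std_mul_conj]
      push_cast
      exact Finset.sum_congr rfl fun n _ => by rw [Complex.star_def, Complex.mul_conj]
    refine ⟨fun i j => ∑ n, Complex.normSq (K n i j),
      fun i j => Finset.sum_nonneg fun n _ => Complex.normSq_nonneg _, ?_, ?_⟩
    · intro j
      have h1 : ((1 : Matrix (Fin d) (Fin d) ℂ)) j j = 1 := Matrix.one_apply_eq j
      rw [← hK1] at h1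
      have h2 : ((∑ n, (K n)ᴴ * K n) : Matrix (Fin d) (Fin d) ℂ) j j
          = ((∑ i, ∑ n, Complex.normSq (K n i j) : ℝ) : ℂ) := by
        simp only [Matrix.sum_apply, Matrix.mul_apply, Matrix.conjTranspose_apply]
        push_cast
        rw [Finset.sum_comm]
        exact Finset.sum_congr rfl fun i _ => Finset.sum_congr rfl fun n _ => by
          rw [Complex.star_def, mul_comm, Complex.mul_conj]
      rw [h2] at h1
      exact_mod_cast h1
    · intro ρ
      have hdecomp : ρ = ∑ j, ∑ k, (ρ j k) • Matrix.single j k (1:ℂ) := by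
        conv_lhs => rw [Matrix.matrix_eq_sum_single ρ]
        refine Finset.sum_congr rfl fun j _ => Finset.sum_congr rfl fun k _ => ?_
        rw [Matrix.smul_single]
        simp
      calc Φ ρ = krausLM K ρ := hΦ ρ
        _ = ∑ j, ∑ k, (ρ j k) • Φ (Matrix.single j k 1) := by
            conv_lhs => rw [hdecomp]
            rw [map_sum]
            refine Finset.sum_congr rfl fun j _ => ?_
            rw [map_sum]
            refine Finset.sum_congr rfl fun k _ => ?_
            rw [_root_.map_smul, hΦ]
        _ = ∑ j, (ρ j j) • Φ (Matrix.single j j 1) := by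
            refine Finset.sum_congr rfl fun j _ => ?_
            refine Finset.sum_eq_single_of_mem j (Finset.mem_univ j) fun k _ hkj => ?_
            rw [hoff j k (fun h => hkj h.symm), smul_zero]
        _ = ∑ j, (ρ j j) • ∑ i, ((∑ n, Complex.normSq (K n i j) : ℝ) : ℂ)
              • Matrix.single i i 1 := by
            refine Finset.sum_congr rfl fun j _ => ?_
            congr 1
            conv_lhs => rw [eq_sum_diag (hdiagE j)]
            exact Finset.sum_congr rfl fun i _ => by rw [hEntry]
        _ = ∑ i, (∑ j, ((∑ n, Complex.normSq (K n i j) : ℝ) : ℂ) * ρ j j)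
              • Matrix.single i i 1 := by
            simp_rw [Finset.smul_sum, smul_smul]
            rw [Finset.sum_comm]
            refine Finset.sum_congr rfl fun i _ => ?_
            rw [← Finset.sum_smul]
            exact congrArg (· • _) (Finset.sum_congr rfl fun j _ => mul_comm _ _)
  · rintro ⟨p, hp0, hp1, hrep⟩
    classical
    set e : Fin (d*d) ≃ Fin d × Fin d := finProdFinEquiv.symm with he
    set K : Fin (d*d) → Matrix (Fin d) (Fin d) ℂ :=
      fun n => ((Real.sqrt (p (e n).1 (e n).2) : ℝ) : ℂ)
        • Matrix.single (e n).1 (e n).2 1 with hK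
    have hsq : ∀ i j : Fin d, ((Real.sqrt (p i j) : ℝ) : ℂ) * ((Real.sqrt (p i j) : ℝ) : ℂ)
        = ((p i j : ℝ) : ℂ) := by
      intro i j
      rw [← Complex.ofReal_mul, Real.mul_self_sqrt (hp0 i j)]
    have hKH : ∀ n, (K n)ᴴ = ((Real.sqrt (p (e n).1 (e n).2) : ℝ) : ℂ)
        • Matrix.single (e n).2 (e n).1 1 := by
      intro n
      simp only [hK]
      rw [Matrix.conjTranspose_smul, stdBasis_conjTranspose]
      congr 1
      simp [Complex.star_def, Complex.conj_ofReal]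
    have hKK : ∀ n, (K n)ᴴ * K n = ((p (e n).1 (e n).2 : ℝ) : ℂ)
        • Matrix.single (e n).2 (e n).2 1 := by
      intro n
      rw [hKH]
      simp only [hK]
      rw [smul_mul_assoc, Matrix.mul_smul, smul_smul, hsq]
      congr 1
      rw [Matrix.single_mul_single_same, one_mul]
    have hKρ : ∀ n ρ, K n * ρ * (K n)ᴴ = ((p (e n).1 (e n).2 : ℂ) * ρ (e n).2 (e n).2)
        • Matrix.single (e n).1 (e n).1 1 := by
      intro n ρ
      rw [hKH]
      simp only [hK]
      rw [smul_mul_assoc, smul_mul_assoc, Matrix.mul_smul, smul_smul, hsq, basis_conj, smul_smul]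
    have hsum_pairs : ∀ (f : Fin d → Fin d → Matrix (Fin d) (Fin d) ℂ),
        (∑ n : Fin (d*d), f (e n).1 (e n).2) = ∑ i, ∑ j, f i j := by
      intro f
      exact (Fintype.sum_equiv e (fun n => f (e n).1 (e n).2) (fun x => f x.1 x.2)
        (fun n => rfl)).trans (Fintype.sum_prod_type (f := fun x => f x.1 x.2))
    have hcomplete : ∑ n, (K n)ᴴ * K n = (1 : Matrix (Fin d) (Fin d) ℂ) := by
      simp_rw [hKK]
      rw [hsum_pairs (fun i j => ((p i j : ℝ) : ℂ) • Matrix.single j j 1)]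
      rw [Finset.sum_comm]
      calc ∑ j, ∑ i, ((p i j : ℝ) : ℂ) • Matrix.single j j (1:ℂ)
          = ∑ j : Fin d, Matrix.single j j (1:ℂ) := by
            refine Finset.sum_congr rfl fun j _ => ?_
            rw [← Finset.sum_smul]
            have h : (∑ i, ((p i j : ℝ) : ℂ)) = 1 := by
              rw [← Complex.ofReal_sum, hp1 j, Complex.ofReal_one]
            rw [h, one_smul]
        _ = 1 := sum_stdBasis_eq_one
    have hKraus : ∀ ρ, (∑ n, K n * ρ * (K n)ᴴ)
        = ∑ i, (∑ j, (p i j : ℂ) * ρ j j) • Matrix.single i i (1:ℂ) := by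
      intro ρ
      simp_rw [hKρ]
      rw [hsum_pairs (fun i j => ((p i j : ℂ) * ρ j j) • Matrix.single i i 1)]
      exact Finset.sum_congr rfl fun i _ => by rw [← Finset.sum_smul]
    have hΦdiag : ∀ ρ, (Φ ρ).IsDiag := by
      intro ρ
      rw [hrep]
      exact sum_isDiag _ fun i => Matrix.IsDiag.smul _ (isDiag_stdBasis i)
    have hcov : ∀ ρ, deph (Φ ρ) = Φ (deph ρ) := by
      intro ρ
      have h2 : Φ (deph ρ) = Φ ρ := by
        rw [hrep, hrep]
        refine Finset.sum_congr rfl fun i _ => ?_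
        congr 1
        refine Finset.sum_congr rfl fun j _ => ?_
        congr 1
        simp [deph]
      rw [h2]
      exact deph_of_isDiag (hΦdiag ρ)
    exact ⟨⟨⟨d*d, K, hcomplete, fun ρ => by rw [hrep, hKraus]⟩, hcov⟩,
      ⟨d*d, K, hcomplete,
        fun n A _ => by rw [hKρ n A]; exact Matrix.IsDiag.smul _ (isDiag_stdBasis _),
        fun ρ => by rw [hrep, hKraus]⟩, fun ρ _ _ => hΦdiag ρ⟩
end

section
/- For any incoherent qubit channel Φ and any qubit state ρ there exists a maximally coherent state |ψ⟩ (depending on ρ) such that C_{l₁}(Φ(ρ)) = C_{l₁}(ρ) · C_{l₁}(Φ(|ψ⟩⟨ψ|)). -/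
open Matrix ComplexOrder

/-- The `l₁` norm of coherence: the sum of moduli of all off-diagonal entries. -/
noncomputable def Cl1 {d : ℕ} (A : Matrix (Fin d) (Fin d) ℂ) : ℝ :=
  ∑ i, ∑ j, if i ≠ j then ‖A i j‖ else 0

lemma Cl1_two (A : Matrix (Fin 2) (Fin 2) ℂ) :
    Cl1 A = ‖A 0 1‖ + ‖A 1 0‖ := by
  simp [Cl1, Fin.sum_univ_two]

/-- For any incoherent qubit channel `Φ` (a linear map sending density matrices
to density matrices and diagonal matrices to diagonal matrices) and any qubit state `ρ`,
there exists a maximally coherent state `|ψ⟩ = (|0⟩ + e^{−iθ}|1⟩)/√2` (depending on `ρ`)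
such that `C_{l₁}(Φ(ρ)) = C_{l₁}(ρ) · C_{l₁}(Φ(|ψ⟩⟨ψ|))`. -/
theorem qubit_coherence_factorization
    (Φ : Matrix (Fin 2) (Fin 2) ℂ →ₗ[ℂ] Matrix (Fin 2) (Fin 2) ℂ)
    (hchan : ∀ ρ : Matrix (Fin 2) (Fin 2) ℂ, ρ.PosSemidef → ρ.trace = 1 →
      (Φ ρ).PosSemidef ∧ (Φ ρ).trace = 1)
    (hinc : ∀ A : Matrix (Fin 2) (Fin 2) ℂ, A.IsDiag → (Φ A).IsDiag)
    (ρ : Matrix (Fin 2) (Fin 2) ℂ) (hρ : ρ.PosSemidef) (htr : ρ.trace = 1) :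
    ∃ θ : ℝ,
      Cl1 (Φ ρ) = Cl1 ρ *
        Cl1 (Φ !![(1 / 2 : ℂ), Complex.exp (Complex.I * θ) / 2;
                  Complex.exp (-(Complex.I * θ)) / 2, (1 / 2 : ℂ)]) := by
  set c : ℂ := ρ 0 1 with hc
  refine ⟨Complex.arg c, ?_⟩
  set θ : ℝ := Complex.arg c with hθ
  set M : Matrix (Fin 2) (Fin 2) ℂ :=
    !![(1 / 2 : ℂ), Complex.exp (Complex.I * θ) / 2;
       Complex.exp (-(Complex.I * θ)) / 2, (1 / 2 : ℂ)] with hM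
  have hpolar : ((‖c‖ : ℂ)) * Complex.exp (Complex.I * θ) = c := by
    rw [mul_comm Complex.I (θ : ℂ)]
    exact Complex.norm_mul_exp_arg_mul_I c
  have hconj : Complex.exp (-(Complex.I * θ)) = starRingEnd ℂ (Complex.exp (Complex.I * θ)) := by
    rw [← Complex.exp_conj]
    congr 1
    simp [Complex.conj_I]
  have hpolar' : ((‖c‖ : ℂ)) * starRingEnd ℂ (Complex.exp (Complex.I * θ))
      = starRingEnd ℂ c := by
    simpa [_root_.map_mul, Complex.conj_ofReal] using congrArg (starRingEnd ℂ) hpolar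
  have hherm : ρ 1 0 = starRingEnd ℂ c := by
    have h := hρ.1
    have := congrFun (congrFun h 1) 0
    simpa [Matrix.conjTranspose_apply, hc] using this.symm
  set D : Matrix (Fin 2) (Fin 2) ℂ := ρ - ((2 * ‖c‖ : ℝ) : ℂ) • M with hD
  have hM01 : M 0 1 = Complex.exp (Complex.I * θ) / 2 := by simp [hM]
  have hM10 : M 1 0 = Complex.exp (-(Complex.I * θ)) / 2 := by simp [hM]
  have e01 : D 0 1 = 0 := by
    rw [hD]
    simp only [Matrix.sub_apply, Matrix.smul_apply, hM01, smul_eq_mul, ← hc]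
    push_cast
    linear_combination -hpolar
  have e10 : D 1 0 = 0 := by
    rw [hD]
    simp only [Matrix.sub_apply, Matrix.smul_apply, hM10, smul_eq_mul, hherm, hconj]
    push_cast
    linear_combination -hpolar'
  have hDdiag : D.IsDiag := by
    intro i j hij
    fin_cases i <;> fin_cases j
    · exact absurd rfl hij
    · exact e01
    · exact e10
    · exact absurd rfl hij
  have hsplit : ρ = D + ((2 * ‖c‖ : ℝ) : ℂ) • M := by
    rw [hD]; abel
  have hΦ : Φ ρ = Φ D + ((2 * ‖c‖ : ℝ) : ℂ) • Φ M := by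
    rw [hsplit, map_add, LinearMap.map_smul]
  have hΦD : (Φ D).IsDiag := hinc D hDdiag
  have h01 : (Φ ρ) 0 1 = ((2 * ‖c‖ : ℝ) : ℂ) * (Φ M) 0 1 := by
    rw [hΦ]; simp [Matrix.add_apply, Matrix.smul_apply, hΦD (by decide : (0 : Fin 2) ≠ 1)]
  have h10 : (Φ ρ) 1 0 = ((2 * ‖c‖ : ℝ) : ℂ) * (Φ M) 1 0 := by
    rw [hΦ]; simp [Matrix.add_apply, Matrix.smul_apply, hΦD (by decide : (1 : Fin 2) ≠ 0)]
  have hCρ : Cl1 ρ = 2 * ‖c‖ := by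
    rw [Cl1_two, ← hc, hherm]
    rw [Complex.norm_conj]
    ring
  rw [Cl1_two (Φ ρ), h01, h10, hCρ, Cl1_two (Φ M)]
  simp [_root_.map_mul, Complex.norm_real,
    abs_of_nonneg (by positivity : (0:ℝ) ≤ 2 * ‖c‖)]
  ring
end
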